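/- arXiv:2108.02447 — 7 statements merged into one kernel-verified Lean document; each statement's English description precedes it below -/
import Mathlib

section
/- If β ≥ 1, then for every fixed u ≥ 0 the map t ↦ L_t(u) is nondecreasing on (0,∞): for all 0 < s < t one has L_s(u) ≤ L_t(u). -/
open MeasureTheory Real Filter Set Topology Asymptotics

/-- The ATS Laplace transform `L_t(u)` with parameters `α ∈ (0,1)`, `k̄ > 0`, `β ∈ ℝ`,
where `k_t = k̄·t^β`. -/
noncomputable def ATSLaplace (α kbar β : ℝ) (t u : ℝ) : ℝ :=
  Real.exp ((t / (kbar * t ^ β)) * ((1 - α) / α) *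
    (1 - (1 + u * (kbar * t ^ β) / ((1 - α) * t)) ^ α))

/-- Standard normal cumulative distribution function. -/
noncomputable def stdN (z : ℝ) : ℝ :=
  (Real.sqrt (2 * Real.pi))⁻¹ * ∫ x in Set.Iic z, Real.exp (-x ^ 2 / 2)

/-- Standard normal probability density function. -/
noncomputable def stdNd (z : ℝ) : ℝ :=
  (Real.sqrt (2 * Real.pi))⁻¹ * Real.exp (-z ^ 2 / 2)

/-- The drift `φ_t`, defined by `φ_t·t = −ln L_t(t·σ̄²·η_t)` with `η_t = η̄·t^δ`. -/
noncomputable def ATSphi (α kbar σbar ηbar β δ : ℝ) (t : ℝ) : ℝ :=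
  -Real.log (ATSLaplace α kbar β t (t * σbar ^ 2 * (ηbar * t ^ δ))) / t

/-- The quantity `l_t^z = −σ̄·η_t·√(z·t) + φ_t·√t/(σ̄·√z)`. -/
noncomputable def ATSl (α kbar σbar ηbar β δ : ℝ) (t z : ℝ) : ℝ :=
  -(σbar * (ηbar * t ^ δ)) * Real.sqrt (z * t) +
    ATSphi α kbar σbar ηbar β δ t * Real.sqrt t / (σbar * Real.sqrt z)

/-- The ATM ATS call price `C_t`. -/
noncomputable def ATSCall (α kbar σbar ηbar β δ : ℝ) (μ : Measure ℝ) (t : ℝ) : ℝ :=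
  ∫ z, (Real.exp (ATSphi α kbar σbar ηbar β δ t * t - t * σbar ^ 2 * (ηbar * t ^ δ) * z) *
      stdN (ATSl α kbar σbar ηbar β δ t z + σbar * Real.sqrt (z * t) / 2) -
      stdN (ATSl α kbar σbar ηbar β δ t z - σbar * Real.sqrt (z * t) / 2)) ∂μ

/-- The skew term `ξ̂_t`. -/
noncomputable def ATSSkew (α kbar σbar ηbar β δ : ℝ) (μ : Measure ℝ) (σhat : ℝ → ℝ)
    (t : ℝ) : ℝ :=
  (stdN (-(σhat t * Real.sqrt t / 2)) -
      ∫ z, stdN (ATSl α kbar σbar ηbar β δ t z - σbar * Real.sqrt (z * t) / 2) ∂μ) /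
    stdNd (-(σhat t * Real.sqrt t / 2))

lemma key_ineq {α a x y : ℝ} (hα0 : 0 < α) (hα1 : α < 1) (ha : 0 ≤ a)
    (hx : 0 < x) (hxy : x ≤ y) :
    (1 - (1 + a*x)^α)/x ≤ (1 - (1 + a*y)^α)/y := by
  have hy : 0 < y := lt_of_lt_of_le hx hxy
  have hconc := Real.concaveOn_rpow hα0.le hα1.le
  have hmem1 : (1 + a*y) ∈ Set.Ici (0:ℝ) := by
    have : 0 ≤ a*y := mul_nonneg ha hy.le
    simp [Set.mem_Ici]; linarith
  have hmem2 : (1:ℝ) ∈ Set.Ici (0:ℝ) := by simp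
  have hl0 : 0 ≤ x/y := by positivity
  have hl1 : 0 ≤ 1 - x/y := by
    have : x/y ≤ 1 := (div_le_one hy).mpr hxy
    linarith
  have hsum : x/y + (1 - x/y) = 1 := by ring
  have hcc := hconc.2 hmem1 hmem2 hl0 hl1 hsum
  have harg : (x/y) • (1 + a*y) + (1 - x/y) • (1:ℝ) = 1 + a*x := by
    field_simp
    simp only [smul_eq_mul, mul_one]; rw [div_mul_eq_mul_div, ← add_div, div_eq_iff hy.ne']; ring
  rw [harg] at hcc
  simp only [smul_eq_mul, Real.one_rpow, mul_one] at hcc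
  rw [div_le_div_iff₀ hx hy]
  have hcc' : x * (1+a*y)^α + (y - x) ≤ y * (1+a*x)^α := by
    have := mul_le_mul_of_nonneg_left hcc hy.le
    field_simp at this
    rw [mul_comm y a, mul_comm x a] at this
    nlinarith [this]
  nlinarith [hcc']

lemma exponent_eq {α kbar β u t : ℝ} (hα0 : 0 < α) (hα1 : α < 1) (hk : 0 < kbar)
    (ht : 0 < t) :
    (t / (kbar * t ^ β)) * ((1 - α) / α) *
      (1 - (1 + u * (kbar * t ^ β) / ((1 - α) * t)) ^ α) =
    ((1 - α) / α / kbar) *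
      ((1 - (1 + (u * kbar / (1 - α)) * t ^ (β - 1)) ^ α) / t ^ (β - 1)) := by
  have hα' : (1:ℝ) - α ≠ 0 := by linarith
  have ht' : t ≠ 0 := ht.ne'
  have htb : t ^ β = t * t ^ (β - 1) := by
    have h := Real.rpow_add ht 1 (β - 1)
    rw [Real.rpow_one, show (1:ℝ) + (β - 1) = β by ring] at h
    exact h
  have harg : 1 + u * (kbar * t ^ β) / ((1 - α) * t)
      = 1 + (u * kbar / (1 - α)) * t ^ (β - 1) := by
    rw [htb]; field_simp
  rw [harg, htb]
  have hx : t ^ (β - 1) ≠ 0 := (Real.rpow_pos_of_pos ht _).ne'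
  field_simp

/-- if `β ≥ 1` then for fixed `u ≥ 0` the map `t ↦ L_t(u)` is
nondecreasing on `(0,∞)`. -/
theorem stmt1 (α kbar β : ℝ) (hα : α ∈ Set.Ioo (0:ℝ) 1) (hk : 0 < kbar)
    (hβ : 1 ≤ β) (u : ℝ) (hu : 0 ≤ u) :
    ∀ s t : ℝ, 0 < s → s < t →
      ATSLaplace α kbar β s u ≤ ATSLaplace α kbar β t u := by
  
  obtain ⟨hα0, hα1⟩ := hα
  intro s t hs hst
  have ht : 0 < t := hs.trans hst
  unfold ATSLaplace
  apply Real.exp_le_exp.mpr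
  rw [exponent_eq hα0 hα1 hk hs, exponent_eq hα0 hα1 hk ht]
  have ha : 0 ≤ u * kbar / (1 - α) :=
    div_nonneg (mul_nonneg hu hk.le) (by linarith)
  have hc : 0 ≤ (1 - α) / α / kbar :=
    div_nonneg (div_nonneg (by linarith) hα0.le) hk.le
  exact mul_le_mul_of_nonneg_left
    (key_ineq hα0 hα1 ha (Real.rpow_pos_of_pos hs _)
      (Real.rpow_le_rpow hs.le hst.le (by linarith))) hc
end

section
/- Let (μ_t)_{t>0} be an ATS mixing family. If β < 1, then μ_t converges weakly (i.e. in distribution) to the Dirac measure at 0 as t → 0⁺; if β > 1, then μ_t converges weakly to the Dirac measure at 1 as t → 0⁺. -/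
open MeasureTheory Real Filter Set Topology Asymptotics

set_option maxHeartbeats 1000000


lemma aux_rpow_le (x p : ℝ) (hx : 0 ≤ x) (h0 : 0 ≤ p) (h1 : p ≤ 1) :
    (1 + x) ^ p ≤ 1 + x ^ p := by
  have h := NNReal.rpow_add_le_add_rpow 1 x.toNNReal h0 h1
  have h' := NNReal.coe_le_coe.2 h
  push_cast [NNReal.coe_rpow] at h'
  simpa [Real.coe_toNNReal x hx] using h'

lemma scale_atTop (kbar β : ℝ) (hk : 0 < kbar) (hβ : β < 1) :
    Tendsto (fun t : ℝ => kbar * t ^ (β - 1)) (𝓝[>] 0) atTop := by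
  have hlog : Tendsto Real.log (𝓝[>] (0:ℝ)) atBot :=
    Real.tendsto_log_nhdsNE_zero.mono_left
      (nhdsWithin_mono _ fun x hx => ne_of_gt hx)
  have h1 : Tendsto (fun t : ℝ => (β - 1) * Real.log t) (𝓝[>] (0:ℝ)) atTop :=
    hlog.const_mul_atBot_of_neg (by linarith)
  have h2 : Tendsto (fun t : ℝ => kbar * Real.exp ((β - 1) * Real.log t)) (𝓝[>] (0:ℝ)) atTop :=
    (Real.tendsto_exp_atTop.comp h1).const_mul_atTop hk
  refine h2.congr' ?_
  filter_upwards [self_mem_nhdsWithin] with t ht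
  rw [Real.rpow_def_of_pos ht, mul_comm (Real.log t)]

lemma scale_zero (kbar β : ℝ) (hk : 0 < kbar) (hβ : 1 < β) :
    Tendsto (fun t : ℝ => kbar * t ^ (β - 1)) (𝓝[>] 0) (𝓝[>] (0:ℝ)) := by
  have hc : ContinuousAt (fun t : ℝ => kbar * t ^ (β - 1)) 0 :=
    continuousAt_const.mul (Real.continuousAt_rpow_const 0 (β - 1) (Or.inr (by linarith)))
  have h0 : Tendsto (fun t : ℝ => kbar * t ^ (β - 1)) (𝓝[>] 0) (𝓝 0) := by
    have := hc.tendsto.mono_left (nhdsWithin_le_nhds (s := Ioi (0:ℝ)))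
    rwa [Real.zero_rpow (by linarith : β - 1 ≠ 0), mul_zero] at this
  refine tendsto_nhdsWithin_of_tendsto_nhds_of_eventually_within _ h0 ?_
  filter_upwards [self_mem_nhdsWithin] with t ht
  exact mul_pos hk (Real.rpow_pos_of_pos ht _)


noncomputable def Gfun (α u s : ℝ) : ℝ := 1/s * ((1-α)/α) * (1 - (1 + u*s/(1-α))^α)

lemma G_atTop {α u : ℝ} (hα : α ∈ Set.Ioo (0:ℝ) 1) (hu : 0 < u) :
    Tendsto (Gfun α u) atTop (𝓝 0) := by
  obtain ⟨hα0, hα1⟩ := hα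
  have h1α : (0:ℝ) < 1 - α := by linarith
  have hlow : Tendsto (fun s : ℝ => -(((1-α)/α) * (u/(1-α))^α * s^(α-1))) atTop (𝓝 0) := by
    have h0 : Tendsto (fun s : ℝ => s ^ (α-1)) atTop (𝓝 0) := by
      have := tendsto_rpow_neg_atTop h1α
      simpa [show -(1-α) = α - 1 by ring] using this
    have := (h0.const_mul (((1-α)/α) * (u/(1-α))^α)).neg
    simpa using this
  refine tendsto_of_tendsto_of_tendsto_of_le_of_le' hlow tendsto_const_nhds ?_ ?_
  · filter_upwards [eventually_gt_atTop (0:ℝ)] with s hs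
    have hx : (0:ℝ) ≤ u*s/(1-α) := by positivity
    have hP : (0:ℝ) < 1/s * ((1-α)/α) := by positivity
    have hb : 1 - (1 + u*s/(1-α))^α ≥ -((u*s/(1-α))^α) := by
      have := aux_rpow_le (u*s/(1-α)) α hx hα0.le hα1.le
      linarith
    have hxeq : (u*s/(1-α))^α = (u/(1-α))^α * s^α := by
      rw [show u*s/(1-α) = (u/(1-α)) * s by ring, Real.mul_rpow (by positivity) hs.le]
    have hse : s^(α-1) = s^α / s := by
      rw [Real.rpow_sub hs, Real.rpow_one]
    have hmul := mul_le_mul_of_nonneg_left hb hP.le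
    have heq : 1/s * ((1-α)/α) * -((u*s/(1-α))^α)
        = -(((1-α)/α) * (u/(1-α))^α * s^(α-1)) := by
      rw [hxeq, hse]; field_simp
    unfold Gfun
    calc -(((1-α)/α) * (u/(1-α))^α * s^(α-1))
        = 1/s * ((1-α)/α) * -((u*s/(1-α))^α) := heq.symm
      _ ≤ 1/s * ((1-α)/α) * (1 - (1 + u*s/(1-α))^α) := hmul
  · filter_upwards [eventually_gt_atTop (0:ℝ)] with s hs
    have hx : (0:ℝ) ≤ u*s/(1-α) := by positivity
    have hP : (0:ℝ) < 1/s * ((1-α)/α) := by positivity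
    have h1 : (1:ℝ) ≤ (1 + u*s/(1-α))^α := by
      have := Real.rpow_le_rpow (by norm_num : (0:ℝ) ≤ 1) (by linarith : (1:ℝ) ≤ 1 + u*s/(1-α)) hα0.le
      simpa using this
    have : 1 - (1 + u*s/(1-α))^α ≤ 0 := by linarith
    unfold Gfun
    nlinarith

lemma G_zero {α u : ℝ} (hα : α ∈ Set.Ioo (0:ℝ) 1) (hu : 0 < u) :
    Tendsto (Gfun α u) (𝓝[>] 0) (𝓝 (-u)) := by
  obtain ⟨hα0, hα1⟩ := hα
  have h1α : (0:ℝ) < 1 - α := by linarith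
  have hd : HasDerivAt (fun y : ℝ => (1+y)^α) α 0 := by
    have h2 := Real.hasDerivAt_rpow_const (x := (1:ℝ)) (p := α) (Or.inl one_ne_zero)
    have h3 := HasDerivAt.comp_const_add 1 0 (by simpa using h2 :
      HasDerivAt (fun y : ℝ => y ^ α) (α * 1 ^ (α-1)) (1 + 0))
    simpa using h3
  have hslope : Tendsto (fun y : ℝ => ((1+y)^α - 1)/y) (𝓝[≠] (0:ℝ)) (𝓝 α) := by
    have := hasDerivAt_iff_tendsto_slope.mp hd
    refine this.congr fun y => ?_
    simp [slope_def_field]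
  have hy : Tendsto (fun s : ℝ => u*s/(1-α)) (𝓝[>] (0:ℝ)) (𝓝[≠] (0:ℝ)) := by
    have hc : Tendsto (fun s : ℝ => u*s/(1-α)) (𝓝 (0:ℝ)) (𝓝 (0:ℝ)) := by
      have : Continuous (fun s : ℝ => u*s/(1-α)) := by continuity
      simpa using this.tendsto 0
    refine tendsto_nhdsWithin_of_tendsto_nhds_of_eventually_within _
      (hc.mono_left nhdsWithin_le_nhds) ?_
    filter_upwards [self_mem_nhdsWithin] with s hs
    exact ne_of_gt (div_pos (mul_pos hu hs) h1α)
  have hmain : Tendsto (fun s : ℝ => -(u/α) * (((1 + u*s/(1-α))^α - 1)/(u*s/(1-α))))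
      (𝓝[>] (0:ℝ)) (𝓝 (-(u/α) * α)) := (hslope.comp hy).const_mul _
  have : -(u/α) * α = -u := by field_simp
  rw [this] at hmain
  refine hmain.congr' ?_
  filter_upwards [self_mem_nhdsWithin] with s hs
  unfold Gfun
  have hs0 : s ≠ 0 := ne_of_gt hs
  field_simp
  ring

lemma lap_eq (α kbar β u : ℝ) (hα : α ∈ Set.Ioo (0:ℝ) 1) (hk : 0 < kbar)
    {t : ℝ} (ht : 0 < t) :
    ATSLaplace α kbar β t u = Real.exp (Gfun α u (kbar * t ^ (β - 1))) := by
  have ht0 : t ≠ 0 := ne_of_gt ht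
  have h1α : (1:ℝ) - α ≠ 0 := by have := hα.2; intro h; linarith
  have hrp : t ^ (β - 1) ≠ 0 := ne_of_gt (Real.rpow_pos_of_pos ht _)
  have hrb : t ^ (β - 1) * t = t ^ β := by
    nth_rewrite 2 [← Real.rpow_one t]
    rw [← Real.rpow_add ht]
    norm_num
  unfold ATSLaplace Gfun
  rw [← hrb]
  have hX : u * (kbar * (t^(β-1) * t)) / ((1-α)*t) = u * (kbar * t^(β-1)) / (1-α) := by
    field_simp
  have hA : t/(kbar*(t^(β-1)*t)) = 1/(kbar*t^(β-1)) := by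
    field_simp
  rw [hX, hA]


lemma lap_tendsto_lt (α kbar β u : ℝ) (hα : α ∈ Set.Ioo (0:ℝ) 1) (hk : 0 < kbar)
    (hu : 0 < u) (hβ : β < 1) :
    Tendsto (fun t => ATSLaplace α kbar β t u) (𝓝[>] (0:ℝ)) (𝓝 1) := by
  have h := (Real.continuous_exp.tendsto 0).comp
    ((G_atTop hα hu).comp (scale_atTop kbar β hk hβ))
  rw [Real.exp_zero] at h
  refine h.congr' ?_
  filter_upwards [self_mem_nhdsWithin] with t ht
  exact (lap_eq α kbar β u hα hk ht).symm

lemma lap_tendsto_gt (α kbar β u : ℝ) (hα : α ∈ Set.Ioo (0:ℝ) 1) (hk : 0 < kbar)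
    (hu : 0 < u) (hβ : 1 < β) :
    Tendsto (fun t => ATSLaplace α kbar β t u) (𝓝[>] (0:ℝ)) (𝓝 (Real.exp (-u))) := by
  have h := (Real.continuous_exp.tendsto (-u)).comp
    ((G_zero hα hu).comp (scale_zero kbar β hk hβ))
  refine h.congr' ?_
  filter_upwards [self_mem_nhdsWithin] with t ht
  exact (lap_eq α kbar β u hα hk ht).symm

lemma weak_to_dirac (a : ℝ) (ha : 0 ≤ a) (μ : ℝ → Measure ℝ)
    (hprob : ∀ t > 0, IsProbabilityMeasure (μ t))
    (hsupp : ∀ t > 0, μ t (Set.Iio 0) = 0)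
    (h1 : Tendsto (fun t => ∫ x, Real.exp (-1 * x) ∂(μ t)) (𝓝[>] (0:ℝ))
      (𝓝 (Real.exp (-a))))
    (h2 : Tendsto (fun t => ∫ x, Real.exp (-2 * x) ∂(μ t)) (𝓝[>] (0:ℝ))
      (𝓝 (Real.exp (-(2*a)))))
    (f : BoundedContinuousFunction ℝ ℝ) :
    Tendsto (fun t => ∫ x, f x ∂(μ t)) (𝓝[>] (0:ℝ)) (𝓝 (f a)) := by
  set c : ℝ := Real.exp (-a) with hc
  have hc0 : 0 < c := Real.exp_pos _
  have hc1 : c ≤ 1 := Real.exp_le_one_iff.2 (by linarith)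
  -- a.e. nonneg
  have hae : ∀ t > (0:ℝ), ∀ᵐ x ∂(μ t), 0 ≤ x := by
    intro t ht
    rw [ae_iff]
    have : {x : ℝ | ¬ 0 ≤ x} = Set.Iio 0 := by ext x; simp [not_le]
    rw [this]; exact hsupp t ht
  have hint1 : ∀ t > (0:ℝ), Integrable (fun x => Real.exp (-1 * x)) (μ t) := by
    intro t ht
    haveI := hprob t ht
    refine Integrable.mono' (integrable_const 1)
      (Continuous.aestronglyMeasurable (by continuity)) ?_
    filter_upwards [hae t ht] with x hx
    rw [Real.norm_eq_abs, abs_of_pos (Real.exp_pos _)]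
    exact Real.exp_le_one_iff.2 (by linarith)
  have hint2 : ∀ t > (0:ℝ), Integrable (fun x => Real.exp (-2 * x)) (μ t) := by
    intro t ht
    haveI := hprob t ht
    refine Integrable.mono' (integrable_const 1)
      (Continuous.aestronglyMeasurable (by continuity)) ?_
    filter_upwards [hae t ht] with x hx
    rw [Real.norm_eq_abs, abs_of_pos (Real.exp_pos _)]
    exact Real.exp_le_one_iff.2 (by linarith)
  have hintsq : ∀ t > (0:ℝ), Integrable (fun x => (Real.exp (-1 * x) - c)^2) (μ t) := by
    intro t ht
    haveI := hprob t ht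
    refine Integrable.mono' (integrable_const 4)
      (Continuous.aestronglyMeasurable (by continuity)) ?_
    filter_upwards [hae t ht] with x hx
    have he1 : Real.exp (-1 * x) ≤ 1 := Real.exp_le_one_iff.2 (by linarith)
    have he0 : 0 < Real.exp (-1 * x) := Real.exp_pos _
    rw [Real.norm_eq_abs, abs_of_nonneg (sq_nonneg _)]
    nlinarith
  -- V equality
  have hVeq : ∀ t > (0:ℝ), ∫ x, (Real.exp (-1 * x) - c)^2 ∂(μ t)
      = (∫ x, Real.exp (-2 * x) ∂(μ t)) - 2*c*(∫ x, Real.exp (-1 * x) ∂(μ t)) + c^2 := by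
    intro t ht
    haveI := hprob t ht
    have hpt : ∀ x : ℝ, (Real.exp (-1 * x) - c)^2
        = Real.exp (-2 * x) - 2*c*Real.exp (-1 * x) + c^2 := by
      intro x
      have : Real.exp (-1 * x) ^ 2 = Real.exp (-2 * x) := by
        rw [sq, ← Real.exp_add]; ring_nf
      nlinarith [this]
    calc ∫ x, (Real.exp (-1 * x) - c)^2 ∂(μ t)
        = ∫ x, (Real.exp (-2 * x) - 2*c*Real.exp (-1 * x) + c^2) ∂(μ t) := by
          exact integral_congr_ae (Filter.Eventually.of_forall fun x => hpt x)
      _ = (∫ x, (Real.exp (-2 * x) - 2*c*Real.exp (-1 * x)) ∂(μ t)) + ∫ _, c^2 ∂(μ t) := by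
          exact integral_add ((hint2 t ht).sub ((hint1 t ht).const_mul (2*c))) (integrable_const _)
      _ = (∫ x, Real.exp (-2 * x) ∂(μ t)) - (∫ x, 2*c*Real.exp (-1 * x) ∂(μ t)) + c^2 := by
          rw [integral_sub (hint2 t ht) ((hint1 t ht).const_mul (2*c)), integral_const,
            probReal_univ]
          simp
      _ = (∫ x, Real.exp (-2 * x) ∂(μ t)) - 2*c*(∫ x, Real.exp (-1 * x) ∂(μ t)) + c^2 := by
          rw [integral_const_mul]
  -- V tends to 0
  have hV : Tendsto (fun t => ∫ x, (Real.exp (-1 * x) - c)^2 ∂(μ t)) (𝓝[>] (0:ℝ)) (𝓝 0) := by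
    have hlim : Tendsto (fun t => (∫ x, Real.exp (-2 * x) ∂(μ t))
        - 2*c*(∫ x, Real.exp (-1 * x) ∂(μ t)) + c^2) (𝓝[>] (0:ℝ))
        (𝓝 (Real.exp (-(2*a)) - 2*c*c + c^2)) :=
      (h2.sub (h1.const_mul (2*c))).add tendsto_const_nhds
    have hz : Real.exp (-(2*a)) - 2*c*c + c^2 = 0 := by
      have : Real.exp (-(2*a)) = c^2 := by
        rw [hc, sq, ← Real.exp_add]; ring_nf
      rw [this]; ring
    rw [hz] at hlim
    refine hlim.congr' ?_
    filter_upwards [self_mem_nhdsWithin] with t ht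
    exact (hVeq t ht).symm
  -- final argument
  rw [Metric.tendsto_nhds]
  intro ε hε
  obtain ⟨δ, hδ, hδf⟩ := Metric.continuousAt_iff.mp (f.continuous.continuousAt (x := a))
    (ε/2) (by linarith)
  set ε₀ : ℝ := min (Real.exp (-a) - Real.exp (-(a+δ))) (Real.exp (-(a-δ)) - Real.exp (-a))
    with hε₀def
  have hε₀ : 0 < ε₀ := by
    refine lt_min ?_ ?_ <;> · rw [sub_pos]; exact Real.exp_lt_exp.2 (by linarith)
  have hclaim : ∀ x : ℝ, |Real.exp (-1 * x) - c| < ε₀ → |x - a| < δ := by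
    intro x hx
    by_contra hcon
    push_neg at hcon
    rcases le_abs.mp hcon with h | h
    · -- x ≥ a + δ
      have : Real.exp (-1 * x) ≤ Real.exp (-(a+δ)) := Real.exp_le_exp.2 (by linarith)
      have h1' : ε₀ ≤ c - Real.exp (-1 * x) := by
        have := min_le_left (Real.exp (-a) - Real.exp (-(a+δ)))
          (Real.exp (-(a-δ)) - Real.exp (-a))
        rw [← hε₀def] at this
        rw [hc]; linarith
      have := (abs_lt.mp hx).1
      linarith
    · -- x ≤ a - δ
      have : Real.exp (-(a-δ)) ≤ Real.exp (-1 * x) := Real.exp_le_exp.2 (by linarith)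
      have h1' : ε₀ ≤ Real.exp (-1 * x) - c := by
        have := min_le_right (Real.exp (-a) - Real.exp (-(a+δ)))
          (Real.exp (-(a-δ)) - Real.exp (-a))
        rw [← hε₀def] at this
        rw [hc]; linarith
      have := (abs_lt.mp hx).2
      linarith
  set K : ℝ := (2*‖f‖ + 1)/ε₀^2 with hKdef
  have hK0 : 0 ≤ K := by positivity
  have hev : ∀ᶠ t in 𝓝[>] (0:ℝ), K * (∫ x, (Real.exp (-1 * x) - c)^2 ∂(μ t)) < ε/2 := by
    have := hV.const_mul K
    rw [mul_zero] at this
    exact this.eventually_lt_const (by linarith)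
  filter_upwards [hev, self_mem_nhdsWithin] with t htV ht
  haveI := hprob t ht
  have hfint : Integrable (fun x => (f : ℝ → ℝ) x) (μ t) := f.integrable (μ t)
  have hptw : ∀ x : ℝ, |(f : ℝ → ℝ) x - f a| ≤ ε/2 + K * (Real.exp (-1 * x) - c)^2 := by
    intro x
    by_cases hx : |Real.exp (-1 * x) - c| < ε₀
    · have := hδf (show dist x a < δ by rw [Real.dist_eq]; exact hclaim x hx)
      rw [Real.dist_eq] at this
      have hnn : 0 ≤ K * (Real.exp (-1 * x) - c)^2 := mul_nonneg hK0 (sq_nonneg _)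
      linarith
    · push_neg at hx
      have hsq : ε₀^2 ≤ (Real.exp (-1 * x) - c)^2 := by
        have h0 := abs_nonneg (Real.exp (-1 * x) - c)
        calc ε₀^2 ≤ |Real.exp (-1 * x) - c|^2 := by nlinarith
          _ = (Real.exp (-1 * x) - c)^2 := sq_abs _
      have hKb : 2*‖f‖ + 1 ≤ K * (Real.exp (-1 * x) - c)^2 := by
        have hKe : K * ε₀^2 = 2*‖f‖ + 1 := by
          rw [hKdef]; field_simp
        have := mul_le_mul_of_nonneg_left hsq hK0
        linarith
      have hfb : |(f : ℝ → ℝ) x - f a| ≤ 2*‖f‖ := by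
        have h1' : |(f : ℝ → ℝ) x| ≤ ‖f‖ := by
          rw [← Real.norm_eq_abs]; exact f.norm_coe_le_norm x
        have h2' : |(f : ℝ → ℝ) a| ≤ ‖f‖ := by
          rw [← Real.norm_eq_abs]; exact f.norm_coe_le_norm a
        calc |(f : ℝ → ℝ) x - f a| ≤ |(f : ℝ → ℝ) x| + |(f : ℝ → ℝ) a| := abs_sub _ _
          _ ≤ 2*‖f‖ := by linarith
      linarith
  rw [Real.dist_eq]
  have hsubint : Integrable (fun x => (f : ℝ → ℝ) x - f a) (μ t) :=
    hfint.sub (integrable_const _)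
  have heq1 : (∫ x, (f : ℝ → ℝ) x ∂(μ t)) - f a = ∫ x, ((f : ℝ → ℝ) x - f a) ∂(μ t) := by
    rw [integral_sub hfint (integrable_const _), integral_const, probReal_univ]
    simp
  rw [heq1]
  calc |∫ x, ((f : ℝ → ℝ) x - f a) ∂(μ t)|
      ≤ ∫ x, |(f : ℝ → ℝ) x - f a| ∂(μ t) := by
        simpa [Real.norm_eq_abs] using norm_integral_le_integral_norm
          (fun x => (f : ℝ → ℝ) x - f a) (μ := μ t)
    _ ≤ ∫ x, (ε/2 + K * (Real.exp (-1 * x) - c)^2) ∂(μ t) := by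
        refine integral_mono hsubint.abs ?_ hptw
        exact (integrable_const _).add ((hintsq t ht).const_mul K)
    _ = ε/2 + K * ∫ x, (Real.exp (-1 * x) - c)^2 ∂(μ t) := by
        rw [integral_add (integrable_const _) ((hintsq t ht).const_mul K),
          integral_const, probReal_univ, integral_const_mul]
        simp
    _ < ε := by linarith

/-- for an ATS mixing family, if `β < 1` then `μ_t` converges weakly to
the Dirac measure at `0` as `t → 0⁺`; if `β > 1`, it converges weakly to the Dirac
measure at `1`. -/
theorem stmt2 (α kbar β : ℝ) (hα : α ∈ Set.Ioo (0:ℝ) 1) (hk : 0 < kbar)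
    (μ : ℝ → Measure ℝ)
    (hprob : ∀ t > 0, IsProbabilityMeasure (μ t))
    (hsupp : ∀ t > 0, μ t (Set.Iio 0) = 0)
    (hlap : ∀ t > 0, ∀ u ≥ 0,
      (∫ x, Real.exp (-u * x) ∂(μ t)) = ATSLaplace α kbar β t u) :
    (β < 1 → ∀ f : BoundedContinuousFunction ℝ ℝ,
        Tendsto (fun t => ∫ x, f x ∂(μ t)) (𝓝[>] (0:ℝ)) (𝓝 (f 0))) ∧
    (1 < β → ∀ f : BoundedContinuousFunction ℝ ℝ,
        Tendsto (fun t => ∫ x, f x ∂(μ t)) (𝓝[>] (0:ℝ)) (𝓝 (f 1))) := by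
  constructor
  · intro hβ f
    refine weak_to_dirac 0 le_rfl μ hprob hsupp ?_ ?_ f
    · have h := lap_tendsto_lt α kbar β 1 hα hk one_pos hβ
      rw [show Real.exp (-(0:ℝ)) = 1 by norm_num]
      refine h.congr' ?_
      filter_upwards [self_mem_nhdsWithin] with t ht
      exact (hlap t ht 1 (by norm_num)).symm
    · have h := lap_tendsto_lt α kbar β 2 hα hk two_pos hβ
      rw [show Real.exp (-(2*(0:ℝ))) = 1 by norm_num]
      refine h.congr' ?_
      filter_upwards [self_mem_nhdsWithin] with t ht
      exact (hlap t ht 2 (by norm_num)).symm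
  · intro hβ f
    refine weak_to_dirac 1 zero_le_one μ hprob hsupp ?_ ?_ f
    · have h := lap_tendsto_gt α kbar β 1 hα hk one_pos hβ
      refine h.congr' ?_
      filter_upwards [self_mem_nhdsWithin] with t ht
      exact (hlap t ht 1 (by norm_num)).symm
    · have h := lap_tendsto_gt α kbar β 2 hα hk two_pos hβ
      rw [show (-(2*(1:ℝ))) = -2 by norm_num]
      refine h.congr' ?_
      filter_upwards [self_mem_nhdsWithin] with t ht
      exact (hlap t ht 2 (by norm_num)).symm
end

section
/- Let (μ_t)_{t>0} be an ATS mixing family. Then for every t > 0 one has ∫ √x dμ_t(x) ≤ √2; moreover, as t → 0⁺, ∫ √x dμ_t(x) tends to 0 if β < 1 and to 1 if β > 1. -/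
open MeasureTheory Real Filter Set Topology Asymptotics

section AuxATS

noncomputable def mybnd (u : ℝ) : ℝ := min 1 u * u ^ (-(3/2) : ℝ)

lemma mybnd_integrableOn : IntegrableOn mybnd (Set.Ioi (0:ℝ)) := by
  have h1 : IntegrableOn mybnd (Set.Ioc (0:ℝ) 1) := by
    have : IntegrableOn (fun u : ℝ => u ^ (-(1/2) : ℝ)) (Set.Ioc (0:ℝ) 1) := by
      have := (intervalIntegral.intervalIntegrable_rpow' (a := 0) (b := 1)
        (r := (-(1/2) : ℝ)) (by norm_num))
      simpa [intervalIntegrable_iff_integrableOn_Ioc_of_le (by norm_num : (0:ℝ) ≤ 1)] using this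
    apply this.congr_fun ?_ measurableSet_Ioc
    intro u hu
    have hu0 : 0 < u := hu.1
    rw [mybnd, min_eq_right hu.2]
    rw [show u * u ^ (-(3/2):ℝ) = u ^ (1:ℝ) * u ^ (-(3/2):ℝ) by rw [Real.rpow_one],
      ← Real.rpow_add hu0]
    norm_num
  have h2 : IntegrableOn mybnd (Set.Ioi (1:ℝ)) := by
    have : IntegrableOn (fun u : ℝ => u ^ (-(3/2) : ℝ)) (Set.Ioi (1:ℝ)) :=
      integrableOn_Ioi_rpow_of_lt (by norm_num) one_pos
    apply this.congr_fun ?_ measurableSet_Ioi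
    intro u hu
    rw [mybnd, min_eq_left (le_of_lt hu), one_mul]
  have := h1.union h2
  rwa [Set.Ioc_union_Ioi_eq_Ioi (by norm_num : (0:ℝ) ≤ 1)] at this

lemma mybnd_nonneg {u : ℝ} (hu : 0 < u) : 0 ≤ mybnd u := by
  apply mul_nonneg (le_min zero_le_one hu.le) (Real.rpow_nonneg hu.le _)

lemma mybnd_integral : ∫ u in Set.Ioi (0:ℝ), mybnd u = 4 := by
  rw [show Set.Ioi (0:ℝ) = Set.Ioc 0 1 ∪ Set.Ioi 1 by
    rw [Set.Ioc_union_Ioi_eq_Ioi (by norm_num : (0:ℝ) ≤ 1)]]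
  rw [setIntegral_union (by simp [Set.disjoint_left]) measurableSet_Ioi
    (mybnd_integrableOn.mono_set Set.Ioc_subset_Ioi_self)
    (mybnd_integrableOn.mono_set (Set.Ioi_subset_Ioi (by norm_num)))]
  have e1 : ∫ u in Set.Ioc (0:ℝ) 1, mybnd u = ∫ u in Set.Ioc (0:ℝ) 1, u ^ (-(1/2):ℝ) := by
    apply setIntegral_congr_fun measurableSet_Ioc
    intro u hu
    rw [mybnd, min_eq_right hu.2,
      show u * u ^ (-(3/2):ℝ) = u ^ (1:ℝ) * u ^ (-(3/2):ℝ) by rw [Real.rpow_one],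
      ← Real.rpow_add hu.1]
    norm_num
  have e2 : ∫ u in Set.Ioi (1:ℝ), mybnd u = ∫ u in Set.Ioi (1:ℝ), u ^ (-(3/2):ℝ) := by
    apply setIntegral_congr_fun measurableSet_Ioi
    intro u hu
    rw [mybnd, min_eq_left (le_of_lt hu), one_mul]
  have v2 : ∫ u in Set.Ioi (1:ℝ), u ^ (-(3/2):ℝ) = 2 := by
    rw [integral_Ioi_rpow_of_lt (by norm_num) one_pos]
    norm_num
  have v1 : ∫ u in Set.Ioc (0:ℝ) 1, u ^ (-(1/2):ℝ) = 2 := by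
    rw [← intervalIntegral.integral_of_le (by norm_num : (0:ℝ) ≤ 1),
      integral_rpow (Or.inl (by norm_num))]
    rw [show (-(1/2):ℝ) + 1 = 1/2 by norm_num, Real.one_rpow,
      Real.zero_rpow (by norm_num)]
    norm_num
  rw [e1, e2, v1, v2]
  norm_num

noncomputable def myg (u : ℝ) : ℝ := (1 - Real.exp (-u)) * u ^ (-(3/2) : ℝ)

noncomputable def myC : ℝ := ∫ u in Set.Ioi (0:ℝ), myg u

lemma one_sub_exp_le' (y : ℝ) : 1 - Real.exp (-y) ≤ y := by
  nlinarith [Real.add_one_le_exp (-y)]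

lemma one_sub_exp_nonneg' {y : ℝ} (h : 0 ≤ y) : 0 ≤ 1 - Real.exp (-y) := by
  have : Real.exp (-y) ≤ Real.exp 0 := Real.exp_le_exp.mpr (by linarith)
  simp only [Real.exp_zero] at this; linarith

lemma one_sub_exp_le_min {y : ℝ} (h : 0 ≤ y) : 1 - Real.exp (-y) ≤ min 1 y :=
  le_min (by nlinarith [Real.exp_pos (-y)]) (one_sub_exp_le' y)

lemma myg_le_mybnd {u : ℝ} (hu : 0 < u) : myg u ≤ mybnd u :=
  mul_le_mul_of_nonneg_right (one_sub_exp_le_min hu.le) (Real.rpow_nonneg hu.le _)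

lemma myg_nonneg {u : ℝ} (hu : 0 < u) : 0 ≤ myg u :=
  mul_nonneg (one_sub_exp_nonneg' hu.le) (Real.rpow_nonneg hu.le _)

lemma myg_integrableOn : IntegrableOn myg (Set.Ioi (0:ℝ)) := by
  apply mybnd_integrableOn.mono' (Measurable.aestronglyMeasurable (by unfold myg; fun_prop))
  filter_upwards [self_mem_ae_restrict (measurableSet_Ioi : MeasurableSet (Set.Ioi (0:ℝ)))]
  intro u hu
  rw [Real.norm_of_nonneg (myg_nonneg hu)]
  exact myg_le_mybnd hu

-- F-per-x bound and integrability
lemma Fx_nonneg {u x : ℝ} (hu : 0 < u) (hx : 0 ≤ x) :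
    0 ≤ (1 - Real.exp (-u * x)) * u ^ (-(3/2) : ℝ) := by
  rw [neg_mul]
  exact mul_nonneg (one_sub_exp_nonneg' (by positivity)) (Real.rpow_nonneg hu.le _)

lemma Fx_le {u x : ℝ} (hu : 0 < u) (hx : 0 ≤ x) :
    (1 - Real.exp (-u * x)) * u ^ (-(3/2) : ℝ) ≤ max 1 x * mybnd u := by
  rw [neg_mul, mybnd]
  have h1 : 1 - Real.exp (-(u * x)) ≤ max 1 x * min 1 u := by
    rcases le_total u 1 with h | h
    · rw [min_eq_right h]
      have h2 : 1 - Real.exp (-(u*x)) ≤ u * x := one_sub_exp_le' _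
      have h3 : u * x ≤ max 1 x * u := by
        have := mul_le_mul_of_nonneg_left (le_max_right 1 x) hu.le
        linarith [mul_comm u (max 1 x)]
      linarith
    · rw [min_eq_left h]
      have h2 : 1 - Real.exp (-(u*x)) ≤ 1 := by
        have := Real.exp_pos (-(u*x)); linarith
      have h3 : (1:ℝ) ≤ max 1 x * 1 := by
        nlinarith [le_max_left 1 x]
      linarith
  have := mul_le_mul_of_nonneg_right h1 (Real.rpow_nonneg hu.le (-(3/2) : ℝ))
  calc (1 - Real.exp (-(u * x))) * u ^ (-(3/2) : ℝ)
      ≤ (max 1 x * min 1 u) * u ^ (-(3/2) : ℝ) := this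
    _ = max 1 x * (min 1 u * u ^ (-(3/2) : ℝ)) := by ring

lemma Fx_integrableOn {x : ℝ} (hx : 0 ≤ x) :
    IntegrableOn (fun u => (1 - Real.exp (-u * x)) * u ^ (-(3/2) : ℝ)) (Set.Ioi (0:ℝ)) := by
  apply (mybnd_integrableOn.const_mul (max 1 x)).mono'
    (Measurable.aestronglyMeasurable (by fun_prop))
  filter_upwards [self_mem_ae_restrict (measurableSet_Ioi : MeasurableSet (Set.Ioi (0:ℝ)))]
  intro u hu
  rw [Real.norm_of_nonneg (Fx_nonneg hu hx)]
  exact Fx_le hu hx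

-- scaling identity
lemma K_eq {x : ℝ} (hx : 0 ≤ x) :
    ∫ u in Set.Ioi (0:ℝ), (1 - Real.exp (-u * x)) * u ^ (-(3/2) : ℝ) = myC * Real.sqrt x := by
  rcases eq_or_lt_of_le hx with rfl | hx0
  · simp [Real.sqrt_zero]
  · have key : ∀ u ∈ Set.Ioi (0:ℝ), (1 - Real.exp (-u * x)) * u ^ (-(3/2) : ℝ)
        = x ^ ((3:ℝ)/2) * myg (x * u) := by
      intro u hu
      rw [myg, mul_comm x u, neg_mul u x]
      have : (u * x) ^ (-(3/2) : ℝ) = u ^ (-(3/2):ℝ) * x ^ (-(3/2):ℝ) :=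
        Real.mul_rpow (le_of_lt hu) hx
      rw [this]
      rw [show x ^ ((3:ℝ)/2) * ((1 - Real.exp (-(u * x))) * (u ^ (-(3/2):ℝ) * x ^ (-(3/2):ℝ)))
        = (1 - Real.exp (-(u * x))) * u ^ (-(3/2):ℝ) * (x ^ ((3:ℝ)/2) * x ^ (-(3/2):ℝ)) by ring]
      rw [← Real.rpow_add hx0]
      norm_num
    rw [setIntegral_congr_fun measurableSet_Ioi key, integral_const_mul]
    rw [show ∫ u in Set.Ioi (0:ℝ), myg (x * u) = x⁻¹ • ∫ v in Set.Ioi (x * 0), myg v from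
      integral_comp_mul_left_Ioi myg 0 hx0]
    rw [mul_zero, smul_eq_mul, ← myC]
    rw [show x ^ ((3:ℝ)/2) * (x⁻¹ * myC) = myC * (x ^ ((3:ℝ)/2) * x ^ (-1:ℝ)) by
      rw [Real.rpow_neg_one]; ring]
    rw [← Real.rpow_add hx0, show (3:ℝ)/2 + -1 = 1/2 by norm_num, ← Real.sqrt_eq_rpow]

lemma exp_neg_le_quad' {v : ℝ} (hv : 0 ≤ v) : Real.exp (-v) ≤ 1 - v + v ^ 2 / 2 := by
  have key : MonotoneOn (fun v : ℝ => 1 - v + v ^ 2 / 2 - Real.exp (-v)) (Set.Ici 0) := by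
    apply monotoneOn_of_deriv_nonneg (convex_Ici 0)
    · fun_prop
    · intro x hx
      have : DifferentiableAt ℝ (fun v : ℝ => 1 - v + v ^ 2 / 2 - Real.exp (-v)) x := by
        fun_prop
      exact this.differentiableWithinAt
    · intro x hx
      rw [interior_Ici] at hx
      have hd : HasDerivAt (fun v : ℝ => 1 - v + v ^ 2 / 2 - Real.exp (-v))
          (-1 + x - Real.exp (-x) * (-1)) x := by
        have h1 : HasDerivAt (fun v : ℝ => Real.exp (-v)) (Real.exp (-x) * (-1)) x := by
          simpa [Function.comp_def] using (Real.hasDerivAt_exp (-x)).comp x (hasDerivAt_neg x)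
        have h2 : HasDerivAt (fun v : ℝ => 1 - v + v ^ 2 / 2) (-1 + x) x := by
          have : HasDerivAt (fun v : ℝ => v ^ 2 / 2) x x := by
            simpa using (hasDerivAt_pow 2 x).div_const 2
          simpa using ((hasDerivAt_const x (1:ℝ)).fun_sub (hasDerivAt_id' x)).fun_add this
        simpa using h2.fun_sub h1
      rw [hd.deriv]
      nlinarith [Real.add_one_le_exp (-x)]
  have := key (self_mem_Ici (a := (0:ℝ))) hv hv
  simp at this; linarith

lemma myC_ge : 2 * Real.sqrt 2 ≤ myC := by
  have s2 : Real.sqrt 2 = (2:ℝ) ^ ((1:ℝ)/2) := Real.sqrt_eq_rpow 2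
  have hs2 : (0:ℝ) < Real.sqrt 2 := Real.sqrt_pos.mpr (by norm_num)
  -- split
  have hsplit : myC = (∫ u in Set.Ioc (0:ℝ) 2, myg u) + ∫ u in Set.Ioi (2:ℝ), myg u := by
    rw [myC, show Set.Ioi (0:ℝ) = Set.Ioc 0 2 ∪ Set.Ioi 2 by
      rw [Set.Ioc_union_Ioi_eq_Ioi (by norm_num : (0:ℝ) ≤ 2)]]
    exact setIntegral_union (by simp [Set.disjoint_left]) measurableSet_Ioi
      (myg_integrableOn.mono_set Set.Ioc_subset_Ioi_self)
      (myg_integrableOn.mono_set (Set.Ioi_subset_Ioi (by norm_num)))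
  -- lower bound on Ioc 0 2
  have hlow1 : ∫ u in Set.Ioc (0:ℝ) 2, (u ^ (-(1/2):ℝ) - u ^ ((1:ℝ)/2) / 2)
      ≤ ∫ u in Set.Ioc (0:ℝ) 2, myg u := by
    apply setIntegral_mono_on ?_ (myg_integrableOn.mono_set Set.Ioc_subset_Ioi_self)
      measurableSet_Ioc
    · intro u hu
      have hu0 : 0 < u := hu.1
      have hq : Real.exp (-u) ≤ 1 - u + u ^ 2 / 2 := exp_neg_le_quad' hu0.le
      have hr : (0:ℝ) ≤ u ^ (-(3/2):ℝ) := Real.rpow_nonneg hu0.le _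
      have e1 : u * u ^ (-(3/2):ℝ) = u ^ (-(1/2):ℝ) := by
        rw [show u * u ^ (-(3/2):ℝ) = u ^ (1:ℝ) * u ^ (-(3/2):ℝ) by rw [Real.rpow_one],
          ← Real.rpow_add hu0]; norm_num
      have e2 : u ^ 2 * u ^ (-(3/2):ℝ) = u ^ ((1:ℝ)/2) := by
        have h2 : u ^ (2:ℝ) = u ^ 2 := by
          rw [show (2:ℝ) = ((2:ℕ):ℝ) by norm_num, Real.rpow_natCast]
        rw [← h2, ← Real.rpow_add hu0]; norm_num
      rw [myg]
      nlinarith [mul_le_mul_of_nonneg_right hq hr]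
    · apply Integrable.sub
      · have := (intervalIntegral.intervalIntegrable_rpow' (a := 0) (b := 2)
          (r := (-(1/2) : ℝ)) (by norm_num))
        simpa [IntegrableOn, intervalIntegrable_iff_integrableOn_Ioc_of_le (by norm_num : (0:ℝ) ≤ 2)]
          using this
      · have := ((intervalIntegral.intervalIntegrable_rpow' (a := 0) (b := 2)
          (r := ((1:ℝ)/2)) (by norm_num))).div_const 2
        simpa [IntegrableOn, intervalIntegrable_iff_integrableOn_Ioc_of_le (by norm_num : (0:ℝ) ≤ 2)]
          using this
  -- lower bound on Ioi 2
  have hlow2 : ∫ u in Set.Ioi (2:ℝ), (1 - Real.exp (-2)) * u ^ (-(3/2):ℝ)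
      ≤ ∫ u in Set.Ioi (2:ℝ), myg u := by
    apply setIntegral_mono_on
      ((integrableOn_Ioi_rpow_of_lt (by norm_num) (by norm_num : (0:ℝ) < 2)).const_mul _)
      (myg_integrableOn.mono_set (Set.Ioi_subset_Ioi (by norm_num))) measurableSet_Ioi
    intro u hu
    have hu2 : (2:ℝ) < u := hu
    have hr : (0:ℝ) ≤ u ^ (-(3/2):ℝ) := Real.rpow_nonneg (by linarith) _
    have : Real.exp (-u) ≤ Real.exp (-2) := Real.exp_le_exp.mpr (by linarith)
    rw [myg]
    apply mul_le_mul_of_nonneg_right (by linarith) hr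
  -- values
  have v1 : ∫ u in Set.Ioc (0:ℝ) 2, (u ^ (-(1/2):ℝ) - u ^ ((1:ℝ)/2) / 2)
      = 2 * Real.sqrt 2 - (2:ℝ)/3 * Real.sqrt 2 := by
    rw [← intervalIntegral.integral_of_le (by norm_num : (0:ℝ) ≤ 2)]
    rw [intervalIntegral.integral_sub
      (intervalIntegral.intervalIntegrable_rpow' (by norm_num))
      ((intervalIntegral.intervalIntegrable_rpow' (by norm_num)).div_const 2)]
    rw [intervalIntegral.integral_div, integral_rpow (Or.inl (by norm_num)),
      integral_rpow (Or.inl (by norm_num))]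
    rw [Real.zero_rpow (by norm_num), Real.zero_rpow (by norm_num)]
    rw [show (-(1/2):ℝ) + 1 = 1/2 by norm_num, show ((1:ℝ)/2) + 1 = 3/2 by norm_num]
    have h32 : (2:ℝ) ^ ((3:ℝ)/2) = 2 * Real.sqrt 2 := by
      rw [show ((3:ℝ)/2) = 1 + (1:ℝ)/2 by norm_num, Real.rpow_add (by norm_num),
        Real.rpow_one, ← s2]
    rw [h32, ← s2]
    ring
  have v2 : ∫ u in Set.Ioi (2:ℝ), (1 - Real.exp (-2)) * u ^ (-(3/2):ℝ)
      = (1 - Real.exp (-2)) * Real.sqrt 2 := by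
    rw [integral_const_mul, integral_Ioi_rpow_of_lt (by norm_num) (by norm_num : (0:ℝ) < 2)]
    congr 1
    rw [show (-(3/2):ℝ) + 1 = -(1/2) by norm_num, Real.rpow_neg (by norm_num), ← s2]
    have hss : Real.sqrt 2 * Real.sqrt 2 = 2 := Real.mul_self_sqrt (by norm_num)
    field_simp; rw [sq, hss]
  have hexp : Real.exp (-2) ≤ 1/3 := by
    rw [Real.exp_neg]
    have h3 : (3:ℝ) ≤ Real.exp 2 := by have := Real.add_one_le_exp (2:ℝ); linarith
    have := Real.exp_pos (2:ℝ)
    rw [inv_le_comm₀ this (by norm_num)]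
    linarith
  rw [hsplit]
  nlinarith [hlow1, hlow2, v1, v2, hs2]

variable {α kbar β : ℝ}

lemma ats_sandwich (hα : α ∈ Set.Ioo (0:ℝ) 1) (hk : 0 < kbar) {t u : ℝ}
    (ht : 0 < t) (hu : 0 ≤ u) :
    0 ≤ 1 - ATSLaplace α kbar β t u ∧ 1 - ATSLaplace α kbar β t u ≤ min 1 u := by
  obtain ⟨hα0, hα1⟩ := hα
  have h1α : (0:ℝ) < 1 - α := by linarith
  have hP : (0:ℝ) < kbar * t ^ β := by positivity
  set P := kbar * t ^ β with hPdef
  set c := (t / P) * ((1 - α) / α) with hcdef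
  set w := u * P / ((1 - α) * t) with hwdef
  have hc : 0 < c := by positivity
  have hw : 0 ≤ w := by positivity
  have hcaw : c * (α * w) = u := by
    rw [hcdef, hwdef]
    field_simp
  have hber : (1 + w) ^ α ≤ 1 + α * w :=
    rpow_one_add_le_one_add_mul_self (by linarith) hα0.le hα1.le
  have hone : (1:ℝ) ≤ (1 + w) ^ α :=
    Real.one_le_rpow (by linarith) hα0.le
  have hz : c * (1 - (1 + w) ^ α) ≤ 0 := by nlinarith
  rw [ATSLaplace]
  constructor
  · have : Real.exp (c * (1 - (1 + w) ^ α)) ≤ Real.exp 0 := Real.exp_le_exp.mpr hz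
    rw [Real.exp_zero] at this
    linarith
  · apply le_min
    · have := Real.exp_pos (c * (1 - (1 + w) ^ α)); linarith
    · have hexp := Real.add_one_le_exp (c * (1 - (1 + w) ^ α))
      have h2 : c * ((1 + w) ^ α - 1) ≤ u := by nlinarith
      linarith

lemma ats_meas (t : ℝ) :
    Measurable (fun u => (1 - ATSLaplace α kbar β t u) * u ^ (-(3/2) : ℝ)) := by
  unfold ATSLaplace
  fun_prop

lemma ats_h_nonneg (hα : α ∈ Set.Ioo (0:ℝ) 1) (hk : 0 < kbar) {t u : ℝ}
    (ht : 0 < t) (hu : 0 < u) :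
    0 ≤ (1 - ATSLaplace α kbar β t u) * u ^ (-(3/2) : ℝ) :=
  mul_nonneg (ats_sandwich hα hk ht hu.le).1 (Real.rpow_nonneg hu.le _)

lemma ats_h_le (hα : α ∈ Set.Ioo (0:ℝ) 1) (hk : 0 < kbar) {t u : ℝ}
    (ht : 0 < t) (hu : 0 < u) :
    (1 - ATSLaplace α kbar β t u) * u ^ (-(3/2) : ℝ) ≤ mybnd u :=
  mul_le_mul_of_nonneg_right (ats_sandwich hα hk ht hu.le).2 (Real.rpow_nonneg hu.le _)

lemma ats_h_integrableOn (hα : α ∈ Set.Ioo (0:ℝ) 1) (hk : 0 < kbar) {t : ℝ} (ht : 0 < t) :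
    IntegrableOn (fun u => (1 - ATSLaplace α kbar β t u) * u ^ (-(3/2) : ℝ))
      (Set.Ioi (0:ℝ)) := by
  apply mybnd_integrableOn.mono' (ats_meas t).aestronglyMeasurable
  filter_upwards [self_mem_ae_restrict (measurableSet_Ioi : MeasurableSet (Set.Ioi (0:ℝ)))]
  intro u hu
  rw [Real.norm_of_nonneg (ats_h_nonneg hα hk ht hu)]
  exact ats_h_le hα hk ht hu

open Filter Topology in
lemma tendsto_rpow_zero' {p : ℝ} (hp : 0 < p) :
    Tendsto (fun t : ℝ => t ^ p) (𝓝[>] (0:ℝ)) (𝓝 0) := by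
  have h := (Real.continuousAt_rpow_const 0 p (Or.inr hp.le)).tendsto
  rw [Real.zero_rpow hp.ne'] at h
  exact h.mono_left nhdsWithin_le_nhds

open Filter Topology in
lemma ats_limit_lt (hα : α ∈ Set.Ioo (0:ℝ) 1) (hk : 0 < kbar) (hβ : β < 1) {u : ℝ}
    (hu : 0 < u) :
    Tendsto (fun t => 1 - ATSLaplace α kbar β t u) (𝓝[>] (0:ℝ)) (𝓝 0) := by
  obtain ⟨hα0, hα1⟩ := hα
  have h1α : (0:ℝ) < 1 - α := by linarith
  set D1 : ℝ := 2 ^ α * ((1 - α) / (α * kbar)) with hD1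
  set D2 : ℝ := 2 ^ α * (((1 - α) / (α * kbar)) * (u * kbar / (1 - α)) ^ α) with hD2
  have hmaj : Tendsto (fun t : ℝ => D1 * t ^ (1 - β) + D2 * t ^ ((1 - β) * (1 - α)))
      (𝓝[>] (0:ℝ)) (𝓝 0) := by
    have l1 := (tendsto_rpow_zero' (by linarith : (0:ℝ) < 1 - β)).const_mul D1
    have l2 := (tendsto_rpow_zero' (by nlinarith : (0:ℝ) < (1 - β) * (1 - α))).const_mul D2
    simpa using l1.add l2
  apply squeeze_zero'
  · filter_upwards [self_mem_nhdsWithin] with t ht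
    exact (ats_sandwich ⟨hα0, hα1⟩ hk ht hu.le).1
  · filter_upwards [self_mem_nhdsWithin] with t ht
    have ht' : (0:ℝ) < t := ht
    have hQ : (0:ℝ) < t ^ β := Real.rpow_pos_of_pos ht' β
    have hP : (0:ℝ) < kbar * t ^ β := by positivity
    set P := kbar * t ^ β with hPdef
    set c := (t / P) * ((1 - α) / α) with hcdef
    set w := u * P / ((1 - α) * t) with hwdef
    have hc : 0 < c := by positivity
    have hw : 0 ≤ w := by positivity
    have hnes : α ≠ 0 ∧ kbar ≠ 0 ∧ (1 - α) ≠ 0 ∧ t ≠ 0 ∧ t ^ β ≠ 0 :=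
      ⟨hα0.ne', hk.ne', h1α.ne', ht'.ne', hQ.ne'⟩
    -- 1 - L ≤ c * ((1+w)^α - 1) ≤ c * (1+w)^α
    have step1 : 1 - ATSLaplace α kbar β t u ≤ c * (1 + w) ^ α := by
      rw [ATSLaplace]
      have hexp := Real.add_one_le_exp (c * (1 - (1 + w) ^ α))
      nlinarith
    -- (1+w)^α ≤ 2^α * (1 + w^α)
    have step2 : (1 + w) ^ α ≤ 2 ^ α * (1 + w ^ α) := by
      have hwa : (0:ℝ) ≤ w ^ α := Real.rpow_nonneg hw _
      have h2a : (0:ℝ) < (2:ℝ) ^ α := Real.rpow_pos_of_pos (by norm_num) _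
      rcases le_total w 1 with h | h
      · have : (1 + w) ^ α ≤ (2:ℝ) ^ α :=
          Real.rpow_le_rpow (by linarith) (by linarith) hα0.le
        nlinarith
      · have h2w : (1 + w) ^ α ≤ (2 * w) ^ α :=
          Real.rpow_le_rpow (by linarith) (by linarith) hα0.le
        have : (2 * w) ^ α = 2 ^ α * w ^ α := Real.mul_rpow (by norm_num) (by linarith)
        nlinarith
    -- c = ((1-α)/(α kbar)) * t^(1-β)
    have hc_eq : c = ((1 - α) / (α * kbar)) * t ^ (1 - β) := by
      rw [hcdef, hPdef, Real.rpow_sub ht', Real.rpow_one]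
      field_simp
    -- c * w^α = ((1-α)/(α kbar)) * (u kbar/(1-α))^α * t^((1-β)(1-α))
    have hcw : c * w ^ α = ((1 - α) / (α * kbar)) * (u * kbar / (1 - α)) ^ α
        * t ^ ((1 - β) * (1 - α)) := by
      have hwexpr : w = (u * kbar / (1 - α)) * t ^ (β - 1) := by
        rw [hwdef, hPdef, Real.rpow_sub ht', Real.rpow_one]
        field_simp
      have hwa : w ^ α = (u * kbar / (1 - α)) ^ α * (t ^ (β - 1)) ^ α := by
        rw [hwexpr]
        exact Real.mul_rpow (by positivity) (Real.rpow_nonneg ht.le _)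
      rw [hwa, hc_eq, ← Real.rpow_mul ht'.le]
      have hpow : t ^ ((1:ℝ) - β) * t ^ ((β - 1) * α) = t ^ ((1 - β) * (1 - α)) := by
        rw [← Real.rpow_add ht']
        ring_nf
      linear_combination ((1 - α) / (α * kbar) * (u * kbar / (1 - α)) ^ α) * hpow
    calc 1 - ATSLaplace α kbar β t u ≤ c * (1 + w) ^ α := step1
      _ ≤ c * (2 ^ α * (1 + w ^ α)) := by
          exact mul_le_mul_of_nonneg_left step2 hc.le
      _ = 2 ^ α * c + 2 ^ α * (c * w ^ α) := by ring
      _ = D1 * t ^ (1 - β) + D2 * t ^ ((1 - β) * (1 - α)) := by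
          rw [hcw, hc_eq, hD1, hD2]; ring
  · exact hmaj

open Filter Topology in
lemma ats_limit_gt (hα : α ∈ Set.Ioo (0:ℝ) 1) (hk : 0 < kbar) (hβ : 1 < β) {u : ℝ}
    (hu : 0 < u) :
    Tendsto (fun t => 1 - ATSLaplace α kbar β t u) (𝓝[>] (0:ℝ))
      (𝓝 (1 - Real.exp (-u))) := by
  obtain ⟨hα0, hα1⟩ := hα
  have h1α : (0:ℝ) < 1 - α := by linarith
  set κ : ℝ := kbar / (1 - α) with hκdef
  have hκ : 0 < κ := by positivity
  set a : ℝ → ℝ := fun t => κ * t ^ (β - 1) with hadef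
  set h : ℝ → ℝ := fun s => (1 + u * s) ^ α with hhdef
  have hderiv : HasDerivAt h (α * u) 0 := by
    have h1 : HasDerivAt (fun s : ℝ => 1 + u * s) u 0 := by
      simpa using ((hasDerivAt_id (0:ℝ)).const_mul u).const_add 1
    have h2 : HasDerivAt (fun y : ℝ => y ^ α) (α * (1:ℝ) ^ (α - 1)) (1 + u * 0) := by
      rw [show (1:ℝ) + u * 0 = 1 by ring]
      exact Real.hasDerivAt_rpow_const (Or.inl one_ne_zero)
    have := h2.comp 0 h1
    simpa [Real.one_rpow, Function.comp_def] using this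
  have hslope : Tendsto (slope h 0) (𝓝[≠] (0:ℝ)) (𝓝 (α * u)) :=
    hasDerivAt_iff_tendsto_slope.mp hderiv
  have ha_to : Tendsto a (𝓝[>] (0:ℝ)) (𝓝[≠] (0:ℝ)) := by
    rw [tendsto_nhdsWithin_iff]
    constructor
    · have := (tendsto_rpow_zero' (by linarith : (0:ℝ) < β - 1)).const_mul κ
      simpa using this
    · filter_upwards [self_mem_nhdsWithin] with t ht
      have ht' : (0:ℝ) < t := ht
      have : 0 < a t := by
        rw [hadef]
        exact mul_pos hκ (Real.rpow_pos_of_pos ht' _)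
      exact this.ne'
  have hcomp : Tendsto (fun t => slope h 0 (a t)) (𝓝[>] (0:ℝ)) (𝓝 (α * u)) :=
    hslope.comp ha_to
  have hE : Tendsto (fun t => (-(1/α)) * slope h 0 (a t)) (𝓝[>] (0:ℝ)) (𝓝 (-u)) := by
    have := hcomp.const_mul (-(1/α))
    rw [show (-(1/α)) * (α * u) = -u by field_simp] at this
    exact this
  have hEcongr : ∀ᶠ t in 𝓝[>] (0:ℝ),
      (-(1/α)) * slope h 0 (a t)
        = (t / (kbar * t ^ β)) * ((1 - α) / α) *
          (1 - (1 + u * (kbar * t ^ β) / ((1 - α) * t)) ^ α) := by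
    filter_upwards [self_mem_nhdsWithin] with t ht
    have ht' : (0:ℝ) < t := ht
    have hQ : (0:ℝ) < t ^ β := Real.rpow_pos_of_pos ht' β
    have hat : 0 < a t := mul_pos hκ (Real.rpow_pos_of_pos ht' _)
    have haexpr : a t = kbar * t ^ β / ((1 - α) * t) := by
      simp only [hadef, hκdef]
      rw [Real.rpow_sub ht', Real.rpow_one]
      field_simp
    have hslope_eq : slope h 0 (a t) = ((1 + u * a t) ^ α - 1) / a t := by
      rw [slope_def_field, hhdef]
      simp [div_eq_div_iff hat.ne']
    have hu_a : u * (kbar * t ^ β) / ((1 - α) * t) = u * a t := by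
      rw [haexpr]; ring
    rw [hslope_eq, hu_a]
    have hceq : t / (kbar * t ^ β) * ((1 - α) / α) = 1 / (α * a t) := by
      rw [haexpr]
      field_simp
    rw [hceq]
    field_simp; ring
  have hEfull : Tendsto (fun t => (t / (kbar * t ^ β)) * ((1 - α) / α) *
      (1 - (1 + u * (kbar * t ^ β) / ((1 - α) * t)) ^ α)) (𝓝[>] (0:ℝ)) (𝓝 (-u)) :=
    hE.congr' hEcongr
  have : Tendsto (fun t => ATSLaplace α kbar β t u) (𝓝[>] (0:ℝ)) (𝓝 (Real.exp (-u))) := by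
    unfold ATSLaplace
    exact (Real.continuous_exp.tendsto _).comp hEfull
  simpa using (tendsto_const_nhds (x := (1:ℝ))).sub this

open MeasureTheory in
lemma ats_repr (hα : α ∈ Set.Ioo (0:ℝ) 1) (hk : 0 < kbar)
    (ν : Measure ℝ) [IsProbabilityMeasure ν] {t : ℝ} (ht : 0 < t)
    (hsupp : ν (Set.Iio 0) = 0)
    (hlap : ∀ u ≥ 0, (∫ x, Real.exp (-u * x) ∂ν) = ATSLaplace α kbar β t u) :
    (∫ x, Real.sqrt x ∂ν)
      = (∫ u in Set.Ioi (0:ℝ), (1 - ATSLaplace α kbar β t u) * u ^ (-(3/2):ℝ)) / myC := by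
  have hC : (0:ℝ) < myC := lt_of_lt_of_le (by positivity) myC_ge
  have hx0 : ∀ᵐ x ∂ν, 0 ≤ x := by
    rw [ae_iff]
    convert hsupp using 2
    ext x; simp [not_le]
  set F : ℝ → ℝ → ℝ := fun u x => (1 - Real.exp (-u * x)) * u ^ (-(3/2):ℝ) with hFdef
  -- integrability of exp(-u x) wrt ν
  have hintexp : ∀ u : ℝ, 0 ≤ u → Integrable (fun x => Real.exp (-u * x)) ν := by
    intro u hu
    apply Integrable.mono' (integrable_const (1:ℝ))
      (Measurable.aestronglyMeasurable (by fun_prop))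
    filter_upwards [hx0] with x hx
    rw [Real.norm_of_nonneg (Real.exp_pos _).le]
    have : -u * x ≤ 0 := by nlinarith
    calc Real.exp (-u * x) ≤ Real.exp 0 := Real.exp_le_exp.mpr this
      _ = 1 := Real.exp_zero
  have hintF : ∀ u : ℝ, 0 ≤ u → Integrable (fun x => F u x) ν := fun u hu =>
    (((integrable_const (1:ℝ)).sub (hintexp u hu)).mul_const _)
  have hFnn : ∀ u : ℝ, 0 ≤ u → (∀ᵐ x ∂ν, 0 ≤ F u x) := by
    intro u hu
    filter_upwards [hx0] with x hx
    rw [hFdef]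
    have : 0 ≤ 1 - Real.exp (-u * x) := by
      rw [neg_mul]
      exact one_sub_exp_nonneg' (by positivity)
    exact mul_nonneg this (Real.rpow_nonneg hu _)
  have hint2 : ∀ u : ℝ, 0 < u →
      (∫ x, F u x ∂ν) = (1 - ATSLaplace α kbar β t u) * u ^ (-(3/2):ℝ) := by
    intro u hu
    rw [hFdef]
    simp only
    rw [integral_mul_const, integral_sub (integrable_const (1:ℝ)) (hintexp u hu.le),
      integral_const, probReal_univ, hlap u hu.le]
    simp
  -- the double lintegral
  set T : ENNReal := ∫⁻ u in Set.Ioi (0:ℝ), ∫⁻ x, ENNReal.ofReal (F u x) ∂ν with hTdef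
  have hswap : T = ∫⁻ x, ∫⁻ u in Set.Ioi (0:ℝ), ENNReal.ofReal (F u x) ∂(volume) ∂ν := by
    rw [hTdef]
    apply lintegral_lintegral_swap
    apply Measurable.aemeasurable
    apply Measurable.ennreal_ofReal
    rw [hFdef]
    fun_prop
  -- Way 1 : T = ofReal I
  set I : ℝ := ∫ u in Set.Ioi (0:ℝ), (1 - ATSLaplace α kbar β t u) * u ^ (-(3/2):ℝ)
    with hIdef
  have hInn : 0 ≤ I := by
    rw [hIdef]
    apply setIntegral_nonneg measurableSet_Ioi
    intro u hu
    exact ats_h_nonneg hα hk ht hu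
  have hway1 : T = ENNReal.ofReal I := by
    rw [hTdef]
    have step : ∀ u ∈ Set.Ioi (0:ℝ), (∫⁻ x, ENNReal.ofReal (F u x) ∂ν)
        = ENNReal.ofReal ((1 - ATSLaplace α kbar β t u) * u ^ (-(3/2):ℝ)) := by
      intro u hu
      rw [← ofReal_integral_eq_lintegral_ofReal (hintF u (le_of_lt hu)) (hFnn u (le_of_lt hu)),
        hint2 u hu]
    rw [setLIntegral_congr_fun measurableSet_Ioi
      step]
    rw [hIdef, ofReal_integral_eq_lintegral_ofReal (ats_h_integrableOn hα hk ht) ?_]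
    filter_upwards [self_mem_ae_restrict (measurableSet_Ioi : MeasurableSet (Set.Ioi (0:ℝ)))]
    with u hu
    exact ats_h_nonneg hα hk ht hu
  -- Way 2 : T = ofReal myC * ∫⁻ ofReal sqrt
  set S : ENNReal := ∫⁻ x, ENNReal.ofReal (Real.sqrt x) ∂ν with hSdef
  have hway2 : T = ENNReal.ofReal myC * S := by
    rw [hswap]
    have step : ∀ᵐ x ∂ν, (∫⁻ u in Set.Ioi (0:ℝ), ENNReal.ofReal (F u x) ∂volume)
        = ENNReal.ofReal myC * ENNReal.ofReal (Real.sqrt x) := by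
      filter_upwards [hx0] with x hx
      have : (∫⁻ u in Set.Ioi (0:ℝ), ENNReal.ofReal (F u x) ∂volume)
          = ENNReal.ofReal (∫ u in Set.Ioi (0:ℝ), F u x ∂volume) := by
        rw [← ofReal_integral_eq_lintegral_ofReal (Fx_integrableOn hx) ?_]
        filter_upwards [self_mem_ae_restrict
          (measurableSet_Ioi : MeasurableSet (Set.Ioi (0:ℝ)))] with u hu
        exact Fx_nonneg hu hx
      rw [this, hFdef]
      simp only
      rw [K_eq hx, ENNReal.ofReal_mul hC.le]
    rw [lintegral_congr_ae step, lintegral_const_mul' _ _ ENNReal.ofReal_ne_top]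
  -- solve for S
  have hCne : ENNReal.ofReal myC ≠ 0 := by
    simp [ENNReal.ofReal_eq_zero, not_le, hC]
  have hS_eq : S = ENNReal.ofReal (I / myC) := by
    rw [ENNReal.ofReal_div_of_pos hC, ← hway1, hway2]
    rw [mul_div_assoc, ENNReal.mul_div_cancel hCne ENNReal.ofReal_ne_top]
  -- conclude
  have hmeas_sqrt : AEStronglyMeasurable Real.sqrt ν :=
    Real.continuous_sqrt.aestronglyMeasurable
  rw [integral_eq_lintegral_of_nonneg_ae (Filter.Eventually.of_forall fun x => Real.sqrt_nonneg x)
    hmeas_sqrt, ← hSdef, hS_eq, ENNReal.toReal_ofReal (by positivity)]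

end AuxATS

/-- for an ATS mixing family, `∫ √x dμ_t(x) ≤ √2` for every `t > 0`;
moreover, as `t → 0⁺`, `∫ √x dμ_t(x)` tends to `0` if `β < 1` and to `1` if `β > 1`. -/
theorem stmt3 (α kbar β : ℝ) (hα : α ∈ Set.Ioo (0:ℝ) 1) (hk : 0 < kbar)
    (μ : ℝ → Measure ℝ)
    (hprob : ∀ t > 0, IsProbabilityMeasure (μ t))
    (hsupp : ∀ t > 0, μ t (Set.Iio 0) = 0)
    (hlap : ∀ t > 0, ∀ u ≥ 0,
      (∫ x, Real.exp (-u * x) ∂(μ t)) = ATSLaplace α kbar β t u) :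
    (∀ t > 0, (∫ x, Real.sqrt x ∂(μ t)) ≤ Real.sqrt 2) ∧
    (β < 1 → Tendsto (fun t => ∫ x, Real.sqrt x ∂(μ t)) (𝓝[>] (0:ℝ)) (𝓝 0)) ∧
    (1 < β → Tendsto (fun t => ∫ x, Real.sqrt x ∂(μ t)) (𝓝[>] (0:ℝ)) (𝓝 1)) := by
  have hC : (0:ℝ) < myC := lt_of_lt_of_le (by positivity) myC_ge
  have hrepr : ∀ t > 0, (∫ x, Real.sqrt x ∂(μ t))
      = (∫ u in Set.Ioi (0:ℝ), (1 - ATSLaplace α kbar β t u) * u ^ (-(3/2):ℝ)) / myC := by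
    intro t ht
    haveI := hprob t ht
    exact ats_repr hα hk (μ t) ht (hsupp t ht) (hlap t ht)
  refine ⟨?_, ?_, ?_⟩
  · intro t ht
    rw [hrepr t ht]
    have hIle : (∫ u in Set.Ioi (0:ℝ), (1 - ATSLaplace α kbar β t u) * u ^ (-(3/2):ℝ))
        ≤ 4 := by
      rw [← mybnd_integral]
      apply setIntegral_mono_on (ats_h_integrableOn hα hk ht) mybnd_integrableOn
        measurableSet_Ioi
      intro u hu
      exact ats_h_le hα hk ht hu
    have h4 : (4:ℝ) / myC ≤ Real.sqrt 2 := by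
      rw [div_le_iff₀ hC]
      have hss := Real.mul_self_sqrt (show (0:ℝ) ≤ 2 by norm_num)
      nlinarith [Real.sqrt_nonneg 2, myC_ge]
    calc (∫ u in Set.Ioi (0:ℝ), (1 - ATSLaplace α kbar β t u) * u ^ (-(3/2):ℝ)) / myC
        ≤ 4 / myC := by
          exact (div_le_div_iff_of_pos_right hC).mpr hIle
      _ ≤ Real.sqrt 2 := h4
  · intro hβ
    have hdct : Tendsto
        (fun t => ∫ u in Set.Ioi (0:ℝ), (1 - ATSLaplace α kbar β t u) * u ^ (-(3/2):ℝ))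
        (𝓝[>] (0:ℝ)) (𝓝 (∫ _ in Set.Ioi (0:ℝ), (0:ℝ))) := by
      apply tendsto_integral_filter_of_dominated_convergence mybnd
      · exact Filter.Eventually.of_forall fun t => (ats_meas t).aestronglyMeasurable
      · filter_upwards [self_mem_nhdsWithin] with t ht
        filter_upwards [self_mem_ae_restrict
          (measurableSet_Ioi : MeasurableSet (Set.Ioi (0:ℝ)))] with u hu
        rw [Real.norm_of_nonneg (ats_h_nonneg hα hk ht hu)]
        exact ats_h_le hα hk ht hu
      · exact mybnd_integrableOn
      · filter_upwards [self_mem_ae_restrict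
          (measurableSet_Ioi : MeasurableSet (Set.Ioi (0:ℝ)))] with u hu
        simpa using (ats_limit_lt hα hk hβ hu).mul_const (u ^ (-(3/2):ℝ))
    rw [integral_zero] at hdct
    have := hdct.div_const myC
    rw [zero_div] at this
    apply this.congr'
    filter_upwards [self_mem_nhdsWithin] with t ht
    exact (hrepr t ht).symm
  · intro hβ
    have hdct : Tendsto
        (fun t => ∫ u in Set.Ioi (0:ℝ), (1 - ATSLaplace α kbar β t u) * u ^ (-(3/2):ℝ))
        (𝓝[>] (0:ℝ)) (𝓝 (∫ u in Set.Ioi (0:ℝ), myg u)) := by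
      apply tendsto_integral_filter_of_dominated_convergence mybnd
      · exact Filter.Eventually.of_forall fun t => (ats_meas t).aestronglyMeasurable
      · filter_upwards [self_mem_nhdsWithin] with t ht
        filter_upwards [self_mem_ae_restrict
          (measurableSet_Ioi : MeasurableSet (Set.Ioi (0:ℝ)))] with u hu
        rw [Real.norm_of_nonneg (ats_h_nonneg hα hk ht hu)]
        exact ats_h_le hα hk ht hu
      · exact mybnd_integrableOn
      · filter_upwards [self_mem_ae_restrict
          (measurableSet_Ioi : MeasurableSet (Set.Ioi (0:ℝ)))] with u hu
        have := (ats_limit_gt hα hk hβ hu).mul_const (u ^ (-(3/2):ℝ))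
        simpa [myg] using this
    rw [← myC] at hdct
    have := hdct.div_const myC
    rw [div_self hC.ne'] at this
    apply this.congr'
    filter_upwards [self_mem_nhdsWithin] with t ht
    exact (hrepr t ht).symm
end

section
/- Let X be a nonnegative real random variable and s ∈ (0,1) with E[X^s] < ∞. Then E[X^s] = ∫_0^∞ (E[e^{−u·X}] − 1)/(Γ(−s)·u^{s+1}) du, where Γ denotes the Gamma function (note Γ(−s) < 0 for s ∈ (0,1)). -/
open MeasureTheory Real Filter Set Topology Asymptotics

-- integrability of the core integrand
lemma auxInt {s : ℝ} (hs0 : 0 < s) (hs1 : s < 1) :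
    IntegrableOn (fun v => (1 - Real.exp (-v)) * v ^ (-s - 1)) (Ioi (0:ℝ)) := by
  have hmeas : Measurable (fun v : ℝ => (1 - Real.exp (-v)) * v ^ (-s - 1)) := by fun_prop
  have h1 : IntegrableOn (fun v => (1 - Real.exp (-v)) * v ^ (-s - 1)) (Ioo (0:ℝ) 1) := by
    have hrs : IntegrableOn (fun v : ℝ => v ^ (-s)) (Ioo (0:ℝ) 1) :=
      (intervalIntegral.integrableOn_Ioo_rpow_iff zero_lt_one).mpr (by linarith)
    refine hrs.mono' hmeas.aestronglyMeasurable ?_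
    filter_upwards [ae_restrict_mem measurableSet_Ioo] with v hv
    have hv0 : 0 < v := hv.1
    have he1 : Real.exp (-v) ≤ 1 := Real.exp_le_one_iff.mpr (by linarith)
    have he2 : 1 - v ≤ Real.exp (-v) := by
      have := Real.add_one_le_exp (-v); linarith
    have hr : (0:ℝ) ≤ v ^ (-s - 1) := Real.rpow_nonneg hv0.le _
    rw [Real.norm_eq_abs, abs_of_nonneg (mul_nonneg (by linarith) hr)]
    calc (1 - Real.exp (-v)) * v ^ (-s - 1) ≤ v * v ^ (-s - 1) :=
          mul_le_mul_of_nonneg_right (by linarith) hr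
      _ = v ^ (-s) := by
          nth_rewrite 1 [← Real.rpow_one v]
          rw [← Real.rpow_add hv0]; ring_nf
  have h2 : IntegrableOn (fun v => (1 - Real.exp (-v)) * v ^ (-s - 1)) (Ici (1:ℝ)) := by
    rw [integrableOn_Ici_iff_integrableOn_Ioi]
    have hrs : IntegrableOn (fun v : ℝ => v ^ (-s - 1)) (Ioi (1:ℝ)) :=
      integrableOn_Ioi_rpow_of_lt (by linarith) zero_lt_one
    refine hrs.mono' hmeas.aestronglyMeasurable ?_
    filter_upwards [ae_restrict_mem measurableSet_Ioi] with v hv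
    have hv0 : (0:ℝ) < v := lt_trans zero_lt_one hv
    have he1 : Real.exp (-v) ≤ 1 := Real.exp_le_one_iff.mpr (by linarith)
    have he0 : 0 < Real.exp (-v) := Real.exp_pos _
    have hr : (0:ℝ) ≤ v ^ (-s - 1) := Real.rpow_nonneg hv0.le _
    rw [Real.norm_eq_abs, abs_of_nonneg (mul_nonneg (by linarith) hr)]
    nlinarith
  exact ((h1.union h2).mono_set (by
    intro x hx
    rcases lt_or_ge x 1 with h | h
    · exact Or.inl ⟨hx, h⟩
    · exact Or.inr h))



lemma coreInt {s : ℝ} (hs0 : 0 < s) (hs1 : s < 1) :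
    ∫ v in Ioi (0:ℝ), (1 - Real.exp (-v)) * v ^ (-s - 1) = Real.Gamma (1 - s) / s := by
  set g : ℝ → ℝ := fun v => -(1/s) * ((1 - Real.exp (-v)) * v ^ (-s)) with hg
  set g' : ℝ → ℝ := fun v =>
    -(1/s) * (Real.exp (-v) * v ^ (-s) + (1 - Real.exp (-v)) * (-s * v ^ (-s - 1))) with hg'
  -- Gamma integrand integrability
  have hGint : IntegrableOn (fun v : ℝ => Real.exp (-v) * v ^ (-s)) (Ioi (0:ℝ)) := by
    have := Real.GammaIntegral_convergent (s := 1 - s) (by linarith)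
    simpa [show (1:ℝ) - s - 1 = -s by ring] using this
  have hGval : ∫ v in Ioi (0:ℝ), Real.exp (-v) * v ^ (-s) = Real.Gamma (1 - s) := by
    rw [Real.Gamma_eq_integral (by linarith : (0:ℝ) < 1 - s)]
    congr 1; ext v; rw [show (1:ℝ) - s - 1 = -s by ring]
  -- pointwise identity between g' and the integrands
  have hgid : ∀ v : ℝ, g' v = (1 - Real.exp (-v)) * v ^ (-s - 1)
      - (1/s) * (Real.exp (-v) * v ^ (-s)) := by
    intro v; simp only [hg']; field_simp; ring
  -- derivative
  have hderiv : ∀ v ∈ Ioi (0:ℝ), HasDerivAt g (g' v) v := by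
    intro v hv
    have h1 : HasDerivAt (fun v : ℝ => 1 - Real.exp (-v)) (Real.exp (-v)) v := by
      have : HasDerivAt (fun v : ℝ => Real.exp (-v)) (-Real.exp (-v)) v := by
        simpa [Function.comp_def] using (Real.hasDerivAt_exp (-v)).comp v (hasDerivAt_neg v)
      simpa using (this.const_sub 1)
    have h2 : HasDerivAt (fun v : ℝ => v ^ (-s)) (-s * v ^ (-s - 1)) v := by
      simpa using Real.hasDerivAt_rpow_const (x := v) (p := -s) (Or.inl (ne_of_gt hv))
    exact (h1.mul h2).const_mul (-(1/s))
  -- integrability of g'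
  have hint' : IntegrableOn g' (Ioi (0:ℝ)) := by
    have : IntegrableOn (fun v => (1 - Real.exp (-v)) * v ^ (-s - 1)
        - (1/s) * (Real.exp (-v) * v ^ (-s))) (Ioi (0:ℝ)) :=
      (auxInt hs0 hs1).sub (hGint.const_mul _)
    exact this.congr_fun (fun v _ => (hgid v).symm) measurableSet_Ioi
  -- continuity at 0 within Ici 0
  have hzero : g 0 = 0 := by simp [hg, Real.zero_rpow (by linarith : -s ≠ 0)]
  have hbound : ∀ v : ℝ, 0 ≤ v → |g v| ≤ (1/s) * v ^ (1 - s) := by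
    intro v hv
    rcases eq_or_lt_of_le hv with h | h
    · simp [← h, hzero, Real.zero_rpow (by linarith : (1:ℝ) - s ≠ 0)]
    · have he1 : Real.exp (-v) ≤ 1 := Real.exp_le_one_iff.mpr (by linarith)
      have he2 : 1 - v ≤ Real.exp (-v) := by have := Real.add_one_le_exp (-v); linarith
      have hr : (0:ℝ) ≤ v ^ (-s) := Real.rpow_nonneg hv _
      have key : (1 - Real.exp (-v)) * v ^ (-s) ≤ v ^ (1 - s) := by
        calc (1 - Real.exp (-v)) * v ^ (-s) ≤ v * v ^ (-s) :=
              mul_le_mul_of_nonneg_right (by linarith) hr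
          _ = v ^ (1 - s) := by
              nth_rewrite 1 [← Real.rpow_one v]
              rw [← Real.rpow_add h]; ring_nf
      have hnn : 0 ≤ (1 - Real.exp (-v)) * v ^ (-s) := mul_nonneg (by linarith) hr
      rw [hg, abs_mul, abs_of_nonneg hnn, abs_neg, abs_of_nonneg (by positivity : (0:ℝ) ≤ 1/s)]
      exact mul_le_mul_of_nonneg_left key (by positivity)
  have hcont : ContinuousWithinAt g (Ici (0:ℝ)) 0 := by
    rw [ContinuousWithinAt, hzero]
    refine squeeze_zero_norm' (a := fun v => (1/s) * v ^ (1 - s)) ?_ ?_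
    · filter_upwards [self_mem_nhdsWithin] with v hv
      rw [Real.norm_eq_abs]; exact hbound v hv
    · have hc : ContinuousAt (fun v : ℝ => (1/s) * v ^ (1 - s)) 0 :=
        (Real.continuousAt_rpow_const 0 (1 - s) (Or.inr (by linarith))).const_smul (1/s)
      have h0 : (1/s) * (0:ℝ) ^ (1 - s) = 0 := by
        simp [Real.zero_rpow (by linarith : (1:ℝ) - s ≠ 0)]
      have := hc.tendsto
      rw [h0] at this
      exact this.mono_left nhdsWithin_le_nhds
  -- limit at infinity
  have htop : Tendsto g atTop (𝓝 0) := by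
    refine squeeze_zero_norm' (a := fun v => (1/s) * v ^ (-s)) ?_ ?_
    · filter_upwards [eventually_ge_atTop (0:ℝ)] with v hv
      rw [Real.norm_eq_abs]
      have he1 : Real.exp (-v) ≤ 1 := Real.exp_le_one_iff.mpr (by linarith)
      have hr : (0:ℝ) ≤ v ^ (-s) := Real.rpow_nonneg hv _
      have hnn : 0 ≤ (1 - Real.exp (-v)) * v ^ (-s) :=
        mul_nonneg (by linarith [Real.exp_pos (-v)]) hr
      rw [hg, abs_mul, abs_of_nonneg hnn, abs_neg, abs_of_nonneg (by positivity : (0:ℝ) ≤ 1/s)]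
      have : (1 - Real.exp (-v)) * v ^ (-s) ≤ 1 * v ^ (-s) :=
        mul_le_mul_of_nonneg_right (by linarith [Real.exp_pos (-v)]) hr
      have hspos : (0:ℝ) < 1/s := by positivity
      nlinarith
    · have := (tendsto_rpow_neg_atTop hs0).const_mul (1/s)
      simpa using this
  have hIBP : ∫ v in Ioi (0:ℝ), g' v = 0 - g 0 :=
    integral_Ioi_of_hasDerivAt_of_tendsto hcont hderiv hint' htop
  rw [hzero, sub_zero] at hIBP
  have := integral_congr_ae (g := fun v => (1 - Real.exp (-v)) * v ^ (-s - 1)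
      - (1/s) * (Real.exp (-v) * v ^ (-s))) (μ := volume.restrict (Ioi (0:ℝ)))
      (Filter.Eventually.of_forall (fun v => hgid v))
  rw [this] at hIBP
  rw [integral_sub (auxInt hs0 hs1) (hGint.const_mul _), integral_const_mul, hGval] at hIBP
  have hs : s ≠ 0 := ne_of_gt hs0
  field_simp at hIBP ⊢
  linarith



-- key facts about Gamma(-s)
lemma gammaNeg {s : ℝ} (hs0 : 0 < s) (hs1 : s < 1) :
    Real.Gamma (1 - s) = -s * Real.Gamma (-s) ∧ Real.Gamma (-s) < 0 := by
  have h1 : Real.Gamma (-s + 1) = -s * Real.Gamma (-s) :=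
    Real.Gamma_add_one (by linarith : -s ≠ 0)
  have h2 : Real.Gamma (1 - s) = -s * Real.Gamma (-s) := by rwa [show (1:ℝ) - s = -s + 1 by ring]
  have hpos : 0 < Real.Gamma (1 - s) := Real.Gamma_pos_of_pos (by linarith)
  refine ⟨h2, ?_⟩
  nlinarith
-- the key pointwise lemma
lemma keyLem {s : ℝ} (hs0 : 0 < s) (hs1 : s < 1) (x : ℝ) (hx : 0 ≤ x) :
    IntegrableOn (fun u => (Real.exp (-u * x) - 1) / (Real.Gamma (-s) * u ^ (s+1))) (Ioi (0:ℝ))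
    ∧ ∫ u in Ioi (0:ℝ), (Real.exp (-u * x) - 1) / (Real.Gamma (-s) * u ^ (s+1)) = x ^ s := by
  obtain ⟨hG, hGneg⟩ := gammaNeg hs0 hs1
  have hGne : Real.Gamma (-s) ≠ 0 := ne_of_lt hGneg
  have hGS : Real.Gamma (1 - s) ≠ 0 := ne_of_gt (Real.Gamma_pos_of_pos (by linarith))
  rcases eq_or_lt_of_le hx with h0 | hxpos
  · constructor
    · apply (integrable_zero _ _ _).congr
      filter_upwards [ae_restrict_mem measurableSet_Ioi] with u _
      simp [← h0]
    · rw [show x = 0 from h0.symm, Real.zero_rpow (ne_of_gt hs0)]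
      rw [setIntegral_congr_fun measurableSet_Ioi (g := fun _ => (0:ℝ))
        (fun u _ => by simp)]
      simp
  · -- x > 0
    -- pointwise identity on Ioi 0
    have hid : ∀ u ∈ Ioi (0:ℝ), (Real.exp (-u * x) - 1) / (Real.Gamma (-s) * u ^ (s+1))
        = (s / Real.Gamma (1 - s)) * (x ^ (s+1) * ((1 - Real.exp (-(x * u))) * (x*u) ^ (-s - 1))) := by
      intro u hu
      have hu0 : (0:ℝ) < u := hu
      have hup : (0:ℝ) < u ^ (s+1) := Real.rpow_pos_of_pos hu0 _
      have hxu : (0:ℝ) < x * u := mul_pos hxpos hu0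
      rw [Real.mul_rpow hxpos.le hu0.le]
      have hx1 : x ^ (s+1) * x ^ (-s-1) = 1 := by
        rw [← Real.rpow_add hxpos, show (s+1)+(-s-1) = 0 by ring, Real.rpow_zero]
      have hu1 : u ^ (-s-1) * u ^ (s+1) = 1 := by
        rw [← Real.rpow_add hu0, show (-s-1)+(s+1) = 0 by ring, Real.rpow_zero]
      simp only [neg_mul]
      have hA : Real.exp (-(x*u)) = Real.exp (-(u*x)) := by rw [mul_comm]
      field_simp
      rw [hG]
      linear_combination (-(s * Real.Gamma (-s) * (1 - Real.exp (-(u*x))) * (u^(-s-1)*u^(s+1)))) * hx1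
        + (-(s * Real.Gamma (-s) * (1 - Real.exp (-(u*x))) )) * hu1
    have hcomp : IntegrableOn (fun u => (1 - Real.exp (-(x * u))) * (x*u) ^ (-s - 1)) (Ioi (0:ℝ)) := by
      have := (integrableOn_Ioi_comp_mul_left_iff
        (fun v => (1 - Real.exp (-v)) * v ^ (-s - 1)) 0 hxpos).mpr
        (by simpa using auxInt hs0 hs1)
      simpa using this
    have hcompval : ∫ u in Ioi (0:ℝ), (1 - Real.exp (-(x * u))) * (x*u) ^ (-s - 1)
        = x⁻¹ * (Real.Gamma (1 - s) / s) := by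
      have := integral_comp_mul_left_Ioi (fun v => (1 - Real.exp (-v)) * v ^ (-s - 1)) 0 hxpos
      simp only [mul_zero] at this
      rw [this, coreInt hs0 hs1, smul_eq_mul]
    constructor
    · exact IntegrableOn.congr_fun
        (((hcomp.const_mul (x ^ (s+1))).const_mul (s / Real.Gamma (1 - s))) : IntegrableOn _ _ _)
        (fun u hu => (hid u hu).symm) measurableSet_Ioi
    · rw [setIntegral_congr_fun measurableSet_Ioi hid, integral_const_mul, integral_const_mul,
        hcompval]
      have hxne : x ≠ 0 := ne_of_gt hxpos
      have h2 : x ^ (s+1) * x⁻¹ = x ^ s := by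
        rw [← Real.rpow_neg_one x, ← Real.rpow_add hxpos, show (s+1)+(-1) = s by ring]
      have h3 : x ^ (s+1) = x ^ s * x := by
        rw [Real.rpow_add hxpos, Real.rpow_one]
      field_simp
      linear_combination h3

/-- for a nonnegative random variable `X` and `s ∈ (0,1)` with
`E[X^s] < ∞`, one has `E[X^s] = ∫_0^∞ (E[e^{−u·X}] − 1)/(Γ(−s)·u^{s+1}) du`. -/
theorem stmt4 {Ω : Type*} [MeasurableSpace Ω] (P : Measure Ω) [IsProbabilityMeasure P]
    (X : Ω → ℝ) (hXm : Measurable X) (hX : ∀ ω, 0 ≤ X ω)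
    (s : ℝ) (hs : s ∈ Set.Ioo (0:ℝ) 1)
    (hint : Integrable (fun ω => X ω ^ s) P) :
    (∫ ω, X ω ^ s ∂P) =
      ∫ u in Set.Ioi (0:ℝ),
        ((∫ ω, Real.exp (-u * X ω) ∂P) - 1) / (Real.Gamma (-s) * u ^ (s + 1)) := by
  obtain ⟨hs0, hs1⟩ := hs
  have hGneg := (gammaNeg hs0 hs1).2
  set F : ℝ → Ω → ℝ := fun u ω => (Real.exp (-u * X ω) - 1) / (Real.Gamma (-s) * u ^ (s+1))
    with hF
  have hexp_int : ∀ u : ℝ, u ∈ Ioi (0:ℝ) → Integrable (fun ω => Real.exp (-u * X ω)) P := by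
    intro u hu
    refine (integrable_const (1:ℝ)).mono'
      (Real.measurable_exp.comp (hXm.const_mul (-u))).aestronglyMeasurable ?_
    filter_upwards with ω
    rw [Real.norm_eq_abs, abs_of_pos (Real.exp_pos _)]
    exact Real.exp_le_one_iff.mpr (by nlinarith [hX ω, mem_Ioi.mp hu])
  have hFnn : ∀ u ∈ Ioi (0:ℝ), ∀ ω, 0 ≤ F u ω := by
    intro u hu ω
    have h1 : Real.exp (-u * X ω) - 1 ≤ 0 := by
      have : Real.exp (-u * X ω) ≤ 1 :=
        Real.exp_le_one_iff.mpr (by nlinarith [hX ω, mem_Ioi.mp hu])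
      linarith
    have h2 : Real.Gamma (-s) * u ^ (s+1) ≤ 0 := by
      have := Real.rpow_pos_of_pos (mem_Ioi.mp hu) (s+1)
      nlinarith
    show 0 ≤ (Real.exp (-u * X ω) - 1) / (Real.Gamma (-s) * u ^ (s+1))
    rw [← neg_div_neg_eq]
    exact div_nonneg (by linarith) (by linarith)
  have hRHS : ∀ u ∈ Ioi (0:ℝ),
      ((∫ ω, Real.exp (-u * X ω) ∂P) - 1) / (Real.Gamma (-s) * u ^ (s + 1)) = ∫ ω, F u ω ∂P := by
    intro u hu
    rw [hF]
    rw [integral_div, integral_sub (hexp_int u hu) (integrable_const 1), integral_const]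
    simp
  rw [setIntegral_congr_fun measurableSet_Ioi hRHS]
  have hmeasF : AEStronglyMeasurable (Function.uncurry F)
      ((volume.restrict (Ioi (0:ℝ))).prod P) := by
    apply Measurable.aestronglyMeasurable
    exact ((Real.measurable_exp.comp ((measurable_fst.neg).mul (hXm.comp measurable_snd))).sub
      measurable_const).div
      ((measurable_fst.pow_const _).const_mul _)
  have hInt2 : Integrable (Function.uncurry F) ((volume.restrict (Ioi (0:ℝ))).prod P) := by
    rw [integrable_prod_iff' hmeasF]
    constructor
    · exact Eventually.of_forall fun ω => (keyLem hs0 hs1 (X ω) (hX ω)).1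
    · have heq : ∀ ω, (∫ u in Ioi (0:ℝ), ‖F u ω‖) = X ω ^ s := by
        intro ω
        rw [← (keyLem hs0 hs1 (X ω) (hX ω)).2]
        refine setIntegral_congr_fun measurableSet_Ioi fun u hu => ?_
        rw [Real.norm_eq_abs, abs_of_nonneg (hFnn u hu ω)]
      have h' : Integrable (fun ω => ∫ u in Ioi (0:ℝ), ‖F u ω‖) P := by
        rw [show (fun ω => ∫ u in Ioi (0:ℝ), ‖F u ω‖) = fun ω => X ω ^ s from funext heq]
        exact hint
      exact h'
  rw [integral_integral_swap hInt2]
  refine integral_congr_ae (Eventually.of_forall fun ω => ?_)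
  exact ((keyLem hs0 hs1 (X ω) (hX ω)).2).symm
end

section
/- Assume δ > −min(1,β). Then, as t → 0⁺, φ_t·t = t·σ̄²·η_t − t·σ̄⁴·η_t²·k_t/2 + O(t·η_t³·k_t²); that is, the function t ↦ φ_t·t − t·σ̄²·η_t + t·σ̄⁴·η_t²·k_t/2 is big-O of t ↦ t·η_t³·k_t² as t → 0⁺. -/
open MeasureTheory Real Filter Set Topology Asymptotics

lemma step_aux (f f' : ℝ → ℝ) (c : ℝ) (n : ℕ)
    (hd : ∀ x : ℝ, -1 < x → HasDerivAt f (f' x) x) (hf0 : f 0 = 0)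
    (h0 : ∀ x : ℝ, 0 ≤ x → 0 ≤ f' x) (h1 : ∀ x : ℝ, 0 ≤ x → f' x ≤ c * x ^ n) :
    ∀ x : ℝ, 0 ≤ x → 0 ≤ f x ∧ f x ≤ c / (n + 1) * x ^ (n + 1) := by
  have hmem : ∀ y : ℝ, y ∈ Ici (0:ℝ) → (-1:ℝ) < y := fun y hy => by
    simp only [mem_Ici] at hy; linarith
  have hmono : MonotoneOn f (Ici 0) := by
    apply monotoneOn_of_deriv_nonneg (convex_Ici 0)
    · exact fun y hy => (hd y (hmem y hy)).continuousAt.continuousWithinAt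
    · rw [interior_Ici]
      exact fun y hy => (hd y (by simp only [mem_Ioi] at hy; linarith)).differentiableAt.differentiableWithinAt
    · rw [interior_Ici]
      intro y hy
      simp only [mem_Ioi] at hy
      rw [(hd y (by linarith)).deriv]
      exact h0 y hy.le
  intro x hx
  constructor
  · have := hmono (self_mem_Ici) (mem_Ici.mpr hx) hx
    rwa [hf0] at this
  · set F : ℝ → ℝ := fun y => c / (n + 1) * y ^ (n + 1) - f y with hF
    have hdF : ∀ y : ℝ, -1 < y → HasDerivAt F (c * y ^ n - f' y) y := by
      intro y hy
      have h1' : HasDerivAt (fun y : ℝ => c / (n + 1) * y ^ (n + 1)) (c * y ^ n) y := by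
        have := (hasDerivAt_pow (n + 1) y).const_mul (c / (n + 1))
        refine this.congr_deriv ?_
        have hne : ((n:ℝ) + 1) ≠ 0 := by positivity
        rw [Nat.add_sub_cancel]; push_cast
        field_simp
      exact h1'.sub (hd y hy)
    have hmonoF : MonotoneOn F (Ici 0) := by
      apply monotoneOn_of_deriv_nonneg (convex_Ici 0)
      · exact fun y hy => (hdF y (hmem y hy)).continuousAt.continuousWithinAt
      · rw [interior_Ici]
        exact fun y hy => (hdF y (by simp only [mem_Ioi] at hy; linarith)).differentiableAt.differentiableWithinAt
      · rw [interior_Ici]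
        intro y hy
        simp only [mem_Ioi] at hy
        rw [(hdF y (by linarith)).deriv]
        have := h1 y hy.le
        linarith
    have hF0 : F 0 = 0 := by simp [hF, hf0]
    have := hmonoF (self_mem_Ici) (mem_Ici.mpr hx) hx
    rw [hF0] at this
    simp only [hF] at this
    linarith

lemma key_taylor {α : ℝ} (hα0 : 0 < α) (hα1 : α < 1) {x : ℝ} (hx : 0 ≤ x) :
    |(1 + x) ^ α - (1 + α * x + α * (α - 1) / 2 * x ^ 2)| ≤ α / 3 * x ^ 3 := by
  set c : ℝ := α * (1 - α) * (2 - α) with hc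
  set g₂ : ℝ → ℝ := fun y => α * (α - 1) * (1 + y) ^ (α - 2) - α * (α - 1) with hg₂
  set g₁ : ℝ → ℝ := fun y => α * (1 + y) ^ (α - 1) - α - α * (α - 1) * y with hg₁
  -- derivative of g₂
  have hbase : ∀ y : ℝ, -1 < y → HasDerivAt (fun z : ℝ => 1 + z) 1 y := fun y _ =>
    (hasDerivAt_id y).const_add 1
  have hpos : ∀ y : ℝ, -1 < y → (0:ℝ) < 1 + y := fun y hy => by linarith
  have hd₂ : ∀ y : ℝ, -1 < y →
      HasDerivAt g₂ (α * (α - 1) * (α - 2) * (1 + y) ^ (α - 3)) y := by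
    intro y hy
    have h := (((hbase y hy).rpow_const (p := α - 2) (Or.inl (hpos y hy).ne')).const_mul
      (α * (α - 1))).sub_const (α * (α - 1))
    refine h.congr_deriv ?_
    rw [show α - 2 - 1 = α - 3 by ring]
    ring
  have hd₁ : ∀ y : ℝ, -1 < y → HasDerivAt g₁ (g₂ y) y := by
    intro y hy
    have h := ((((hbase y hy).rpow_const (p := α - 1) (Or.inl (hpos y hy).ne')).const_mul α).sub_const
      α).sub ((hasDerivAt_id y).const_mul (α * (α - 1)))
    refine h.congr_deriv ?_
    rw [show α - 1 - 1 = α - 2 by ring]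
    simp [hg₂]
    ring
  have hd₀ : ∀ y : ℝ, -1 < y →
      HasDerivAt (fun z : ℝ => (1 + z) ^ α - 1 - α * z - α * (α - 1) / 2 * z ^ 2) (g₁ y) y := by
    intro y hy
    have h := ((((hbase y hy).rpow_const (p := α) (Or.inl (hpos y hy).ne')).sub_const 1).sub
      ((hasDerivAt_id y).const_mul α)).sub ((hasDerivAt_pow 2 y).const_mul (α * (α - 1) / 2))
    refine h.congr_deriv ?_
    simp [hg₁]
    ring
  -- bounds on g₃
  have hcpos : 0 < c := by
    rw [hc]
    apply mul_pos (mul_pos hα0 (by linarith)) (by linarith)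
  have hb0 : ∀ y : ℝ, 0 ≤ y → 0 ≤ α * (α - 1) * (α - 2) * (1 + y) ^ (α - 3) := by
    intro y hy
    have hp : (0:ℝ) < (1 + y) ^ (α - 3) := rpow_pos_of_pos (by linarith) _
    nlinarith
  have hb1 : ∀ y : ℝ, 0 ≤ y → α * (α - 1) * (α - 2) * (1 + y) ^ (α - 3) ≤ c * y ^ 0 := by
    intro y hy
    have hp1 : (1 + y) ^ (α - 3) ≤ 1 :=
      rpow_le_one_of_one_le_of_nonpos (by linarith) (by linarith)
    have hp : (0:ℝ) < (1 + y) ^ (α - 3) := rpow_pos_of_pos (by linarith) _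
    have : α * (α - 1) * (α - 2) = c := by rw [hc]; ring
    rw [pow_zero, mul_one, ← this]
    nlinarith
  have hg₂0 : g₂ 0 = 0 := by simp [hg₂]
  have s2 := step_aux g₂ _ c 0 hd₂ hg₂0 hb0 hb1
  have hg₁0 : g₁ 0 = 0 := by simp [hg₁]
  have s1 := step_aux g₁ g₂ c 1 hd₁ hg₁0
    (fun y hy => (s2 y hy).1)
    (fun y hy => by have := (s2 y hy).2; simpa using this)
  have hg₀0 : (fun z : ℝ => (1 + z) ^ α - 1 - α * z - α * (α - 1) / 2 * z ^ 2) 0 = 0 := by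
    simp
  have s0 := step_aux _ g₁ (c / 2) 2 hd₀ hg₀0
    (fun y hy => (s1 y hy).1)
    (fun y hy => by have := (s1 y hy).2; norm_num at this ⊢; linarith)
  obtain ⟨hlo, hhi⟩ := s0 x hx
  have hcle : c / 2 / (2 + 1) * x ^ (2 + 1) ≤ α / 3 * x ^ 3 := by
    have hx3 : 0 ≤ x ^ 3 := by positivity
    have : c ≤ 2 * α := by
      rw [hc]
      nlinarith [mul_nonneg (sq_nonneg α) (show (0:ℝ) ≤ 3 - α by linarith)]
    norm_num
    nlinarith
  rw [abs_le]
  constructor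
  · nlinarith [hlo]
  · nlinarith [hhi, hcle]

/-- if `δ > −min(1,β)` then, as `t → 0⁺`,
`φ_t·t = t·σ̄²·η_t − t·σ̄⁴·η_t²·k_t/2 + O(t·η_t³·k_t²)`. -/
theorem stmt6 (α kbar σbar ηbar β δ : ℝ) (hα : α ∈ Set.Ioo (0:ℝ) 1)
    (hk : 0 < kbar) (hσ : 0 < σbar) (hη : 0 < ηbar)
    (hδ : -min 1 β < δ) :
    (fun t => ATSphi α kbar σbar ηbar β δ t * t - t * σbar ^ 2 * (ηbar * t ^ δ) +
        t * σbar ^ 4 * (ηbar * t ^ δ) ^ 2 * (kbar * t ^ β) / 2)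
      =O[𝓝[>] (0:ℝ)]
      (fun t => t * (ηbar * t ^ δ) ^ 3 * (kbar * t ^ β) ^ 2) := by
  obtain ⟨hα0, hα1⟩ := hα
  have h1α : (0:ℝ) < 1 - α := by linarith
  rw [Asymptotics.isBigO_iff]
  refine ⟨σbar ^ 6 / (3 * (1 - α) ^ 2), ?_⟩
  filter_upwards [self_mem_nhdsWithin] with t ht
  have ht0 : (0:ℝ) < t := ht
  have ht' : t ≠ 0 := ne_of_gt ht0
  have hktpos : (0:ℝ) < kbar * t ^ β := mul_pos hk (rpow_pos_of_pos ht0 β)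
  have hηtpos : (0:ℝ) < ηbar * t ^ δ := mul_pos hη (rpow_pos_of_pos ht0 δ)
  set kt := kbar * t ^ β with hkt
  set ηt := ηbar * t ^ δ with hηt
  set x := σbar ^ 2 * ηt * kt / (1 - α) with hx
  have hxpos : 0 < x := by
    rw [hx]; positivity
  have harg : t * σbar ^ 2 * ηt * kt / ((1 - α) * t) = x := by
    rw [hx]
    field_simp
  have hphi : ATSphi α kbar σbar ηbar β δ t * t =
      t / kt * ((1 - α) / α) * ((1 + x) ^ α - 1) := by
    unfold ATSphi ATSLaplace
    rw [← hkt, ← hηt, Real.log_exp, harg, neg_div, neg_mul, div_mul_cancel₀ _ ht']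
    ring
  have hval : ATSphi α kbar σbar ηbar β δ t * t - t * σbar ^ 2 * ηt +
      t * σbar ^ 4 * ηt ^ 2 * kt / 2 =
      t / kt * ((1 - α) / α) * ((1 + x) ^ α - (1 + α * x + α * (α - 1) / 2 * x ^ 2)) := by
    rw [hphi, hx]
    field_simp
    ring
  have hK : 0 < t / kt * ((1 - α) / α) := by positivity
  have hkey := key_taylor hα0 hα1 hxpos.le
  have hgt : 0 < t * ηt ^ 3 * kt ^ 2 := by positivity
  rw [Real.norm_eq_abs, Real.norm_eq_abs, hval, abs_mul, abs_of_pos hK, abs_of_pos hgt]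
  calc t / kt * ((1 - α) / α) * |(1 + x) ^ α - (1 + α * x + α * (α - 1) / 2 * x ^ 2)|
      ≤ t / kt * ((1 - α) / α) * (α / 3 * x ^ 3) := by
        exact mul_le_mul_of_nonneg_left hkey hK.le
    _ = σbar ^ 6 / (3 * (1 - α) ^ 2) * (t * ηt ^ 3 * kt ^ 2) := by
        rw [hx]
        field_simp
end

section
/- For every t > 0 one has φ_t/(σ̄²·η_t) ≤ 1. Moreover, if δ > −min(1,β), then φ_t/(σ̄²·η_t) → 1 as t → 0⁺. -/
open MeasureTheory Real Filter Set Topology Asymptotics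

private lemma stmt7_key (α kbar σbar ηbar β δ : ℝ) (hα : α ∈ Set.Ioo (0:ℝ) 1)
    (hk : 0 < kbar) (hσ : 0 < σbar) (hη : 0 < ηbar) {t : ℝ} (ht : 0 < t) :
    ATSphi α kbar σbar ηbar β δ t / (σbar ^ 2 * (ηbar * t ^ δ)) =
      ((1 + σbar ^ 2 * ηbar * kbar * t ^ (β + δ) / (1 - α)) ^ α - 1) /
        (α * (σbar ^ 2 * ηbar * kbar * t ^ (β + δ) / (1 - α))) := by
  have h1 : (0:ℝ) < 1 - α := by linarith [hα.2]
  have hα0 := hα.1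
  have hT : (0:ℝ) < t ^ β := Real.rpow_pos_of_pos ht β
  have hD : (0:ℝ) < t ^ δ := Real.rpow_pos_of_pos ht δ
  have hbd : t ^ (β + δ) = t ^ β * t ^ δ := Real.rpow_add ht β δ
  unfold ATSphi ATSLaplace
  rw [Real.log_exp, hbd]
  have harg : t * σbar ^ 2 * (ηbar * t ^ δ) * (kbar * t ^ β) / ((1 - α) * t)
      = σbar ^ 2 * ηbar * kbar * (t ^ β * t ^ δ) / (1 - α) := by
    field_simp
  rw [harg]
  field_simp
  ring

private lemma stmt7_ratio_le (α : ℝ) (hα : α ∈ Set.Ioo (0:ℝ) 1) {a : ℝ} (ha : 0 < a) :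
    ((1 + a) ^ α - 1) / (α * a) ≤ 1 := by
  have hb : (1 + a) ^ α ≤ 1 + α * a :=
    rpow_one_add_le_one_add_mul_self (by linarith) hα.1.le hα.2.le
  rw [div_le_one (mul_pos hα.1 ha)]
  linarith

private lemma stmt7_ratio_tendsto (α : ℝ) (hα : α ∈ Set.Ioo (0:ℝ) 1) :
    Tendsto (fun a : ℝ => ((1 + a) ^ α - 1) / (α * a)) (𝓝[>] (0:ℝ)) (𝓝 1) := by
  have hd : HasDerivAt (fun x : ℝ => (1 + x) ^ α) α 0 := by
    have h1 : HasDerivAt (fun x : ℝ => (1 + x)) 1 0 := by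
      simpa using (hasDerivAt_id (0:ℝ)).const_add (1:ℝ)
    have h2 : HasDerivAt (fun y : ℝ => y ^ α) (α * (1:ℝ) ^ (α - 1))
        ((fun x : ℝ => 1 + x) 0) := by
      simpa using Real.hasDerivAt_rpow_const (p := α) (Or.inl one_ne_zero)
    have h3 := h2.comp 0 h1
    simpa [Function.comp_def] using h3
  have hslope : Tendsto (fun a : ℝ => ((1 + a) ^ α - 1) / a) (𝓝[≠] (0:ℝ)) (𝓝 α) := by
    have := hasDerivAt_iff_tendsto_slope.mp hd
    refine this.congr' ?_
    filter_upwards [self_mem_nhdsWithin] with a ha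
    simp [slope_def_field]
  have hmono : 𝓝[>] (0:ℝ) ≤ 𝓝[≠] (0:ℝ) :=
    nhdsWithin_mono 0 (fun x hx => ne_of_gt hx)
  have h3 : Tendsto (fun a : ℝ => ((1 + a) ^ α - 1) / a) (𝓝[>] (0:ℝ)) (𝓝 α) :=
    hslope.mono_left hmono
  have h4 := h3.div_const α
  rw [div_self (ne_of_gt hα.1)] at h4
  refine h4.congr fun a => ?_
  rw [div_div, mul_comm a α]

/-- `φ_t/(σ̄²·η_t) ≤ 1` for every `t > 0`; moreover if `δ > −min(1,β)`
then `φ_t/(σ̄²·η_t) → 1` as `t → 0⁺`. -/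
theorem stmt7 (α kbar σbar ηbar β δ : ℝ) (hα : α ∈ Set.Ioo (0:ℝ) 1)
    (hk : 0 < kbar) (hσ : 0 < σbar) (hη : 0 < ηbar) :
    (∀ t > 0, ATSphi α kbar σbar ηbar β δ t / (σbar ^ 2 * (ηbar * t ^ δ)) ≤ 1) ∧
    (-min 1 β < δ →
      Tendsto (fun t => ATSphi α kbar σbar ηbar β δ t / (σbar ^ 2 * (ηbar * t ^ δ)))
        (𝓝[>] (0:ℝ)) (𝓝 1)) := by
  
  have h1 : (0:ℝ) < 1 - α := by linarith [hα.2]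
  set a : ℝ → ℝ := fun t => σbar ^ 2 * ηbar * kbar * t ^ (β + δ) / (1 - α) with ha_def
  constructor
  · intro t ht
    have hat : 0 < a t := by
      have := Real.rpow_pos_of_pos ht (β + δ); positivity
    rw [stmt7_key α kbar σbar ηbar β δ hα hk hσ hη ht]
    exact stmt7_ratio_le α hα hat
  · intro hδ
    have hp : 0 < β + δ := by
      have : min 1 β ≤ β := min_le_right 1 β
      linarith
    have hta : Tendsto a (𝓝[>] (0:ℝ)) (𝓝[>] (0:ℝ)) := by
      rw [tendsto_nhdsWithin_iff]
      constructor
      · have hc : Tendsto (fun x : ℝ => x ^ (β + δ)) (𝓝[>] (0:ℝ)) (𝓝 ((0:ℝ) ^ (β + δ))) :=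
          ((Real.continuousAt_rpow_const 0 (β + δ) (Or.inr hp.le)).tendsto).mono_left
            nhdsWithin_le_nhds
        rw [Real.zero_rpow (ne_of_gt hp)] at hc
        have h5 := (hc.const_mul (σbar ^ 2 * ηbar * kbar)).div_const (1 - α)
        simpa [ha_def] using h5
      · filter_upwards [self_mem_nhdsWithin] with t ht
        have := Real.rpow_pos_of_pos ht (β + δ)
        have : 0 < a t := by positivity
        exact this
    have := (stmt7_ratio_tendsto α hα).comp hta
    refine this.congr' ?_
    filter_upwards [self_mem_nhdsWithin] with t ht
    exact (stmt7_key α kbar σbar ηbar β δ hα hk hσ hη ht).symm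
end

section
/- Assume δ = −1/2 and β > 1/2. Let (X_t)_{t>0} be strictly positive real random variables converging in distribution, as t → 0⁺, to a strictly positive random variable X. Then E[ N( σ̄·η̄·(−√(X_t) + φ_t/(σ̄²·η_t·√(X_t))) − σ̄·√(t·X_t)/2 ) ] → E[ N( σ̄·η̄·(−√X + 1/√X) ) ] as t → 0⁺. -/
open MeasureTheory Real Filter Set Topology Asymptotics

lemma gphi_eq : (fun x : ℝ => Real.exp (-x ^ 2 / 2)) = fun x => Real.exp (-(1/2) * x ^ 2) := by
  funext x; congr 1; ring

lemma gphi_integrable : Integrable (fun x : ℝ => Real.exp (-x ^ 2 / 2)) := by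
  rw [gphi_eq]; exact integrable_exp_neg_mul_sq (by norm_num)

lemma integral_gphi : ∫ x : ℝ, Real.exp (-x ^ 2 / 2) = Real.sqrt (2 * Real.pi) := by
  rw [gphi_eq, integral_gaussian]
  congr 1
  ring

lemma sqrt2pi_pos : 0 < Real.sqrt (2 * Real.pi) :=
  Real.sqrt_pos.2 (by positivity)

lemma sqrt2pi_inv_le_one : (Real.sqrt (2 * Real.pi))⁻¹ ≤ 1 := by
  rw [inv_le_one_iff₀]
  right
  rw [show (1:ℝ) = Real.sqrt 1 by simp]
  exact Real.sqrt_le_sqrt (by nlinarith [Real.pi_gt_three])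

lemma gphi_pos (x : ℝ) : 0 < Real.exp (-x ^ 2 / 2) := Real.exp_pos _

lemma gphi_le_one (x : ℝ) : Real.exp (-x ^ 2 / 2) ≤ 1 := by
  rw [Real.exp_le_one_iff]; nlinarith [sq_nonneg x]

lemma stdN_mono : Monotone stdN := by
  intro a b hab
  apply mul_le_mul_of_nonneg_left _ (le_of_lt (inv_pos.2 sqrt2pi_pos))
  exact setIntegral_mono_set gphi_integrable.integrableOn
    (Filter.Eventually.of_forall fun x => (gphi_pos x).le)
    (HasSubset.Subset.eventuallyLE (Iic_subset_Iic.2 hab))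

lemma stdN_nonneg (z : ℝ) : 0 ≤ stdN z := by
  apply mul_nonneg (le_of_lt (inv_pos.2 sqrt2pi_pos))
  exact setIntegral_nonneg measurableSet_Iic fun x _ => (gphi_pos x).le

lemma stdN_le_one (z : ℝ) : stdN z ≤ 1 := by
  have h : ∫ x in Set.Iic z, Real.exp (-x ^ 2 / 2) ≤ Real.sqrt (2 * Real.pi) := by
    rw [← integral_gphi]
    exact setIntegral_le_integral gphi_integrable
      (Filter.Eventually.of_forall fun x => (gphi_pos x).le)
  calc stdN z ≤ (Real.sqrt (2 * Real.pi))⁻¹ * Real.sqrt (2 * Real.pi) :=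
        mul_le_mul_of_nonneg_left h (le_of_lt (inv_pos.2 sqrt2pi_pos))
    _ = 1 := inv_mul_cancel₀ (ne_of_gt sqrt2pi_pos)

lemma stdN_sub_le {a b : ℝ} (hab : a ≤ b) : stdN b - stdN a ≤ b - a := by
  have h1 : stdN b - stdN a = (Real.sqrt (2 * Real.pi))⁻¹ * ∫ x in a..b, Real.exp (-x ^ 2 / 2) := by
    rw [stdN, stdN, ← mul_sub, intervalIntegral.integral_Iic_sub_Iic
      gphi_integrable.integrableOn gphi_integrable.integrableOn]
  have h2 : ∫ x in a..b, Real.exp (-x ^ 2 / 2) ≤ b - a := by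
    calc ∫ x in a..b, Real.exp (-x ^ 2 / 2) ≤ ∫ _x in a..b, (1:ℝ) := by
          apply intervalIntegral.integral_mono_on hab
            gphi_integrable.intervalIntegrable (intervalIntegrable_const)
          exact fun x _ => gphi_le_one x
      _ = b - a := by simp
  rw [h1]
  calc (Real.sqrt (2 * Real.pi))⁻¹ * ∫ x in a..b, Real.exp (-x ^ 2 / 2)
      ≤ 1 * (b - a) := by
        apply mul_le_mul sqrt2pi_inv_le_one h2 _ zero_le_one
        rw [intervalIntegral.integral_of_le hab]
        exact setIntegral_nonneg measurableSet_Ioc fun x _ => (gphi_pos x).le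
    _ = b - a := one_mul _

lemma stdN_abs_sub (a b : ℝ) : |stdN a - stdN b| ≤ |a - b| := by
  rcases le_total a b with h | h
  · rw [abs_sub_comm, abs_of_nonneg (sub_nonneg.2 (stdN_mono h)),
      abs_sub_comm, abs_of_nonneg (sub_nonneg.2 h)]
    exact stdN_sub_le h
  · rw [abs_of_nonneg (sub_nonneg.2 (stdN_mono h)), abs_of_nonneg (sub_nonneg.2 h)]
    exact stdN_sub_le h

lemma stdN_lipschitz : LipschitzWith 1 stdN := by
  apply LipschitzWith.of_dist_le_mul
  intro x y
  rw [Real.dist_eq, Real.dist_eq, NNReal.coe_one, one_mul]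
  exact stdN_abs_sub x y

lemma stdN_continuous : Continuous stdN := stdN_lipschitz.continuous

lemma stdN_tendsto_atTop : Tendsto stdN atTop (𝓝 1) := by
  have h0 : Tendsto (fun z : ℝ => ∫ x in (0:ℝ)..z, Real.exp (-x ^ 2 / 2)) atTop
      (𝓝 (∫ x in Set.Ioi (0:ℝ), Real.exp (-x ^ 2 / 2))) :=
    intervalIntegral_tendsto_integral_Ioi 0 gphi_integrable.integrableOn tendsto_id
  have heq : ∀ z : ℝ, stdN z = (Real.sqrt (2 * Real.pi))⁻¹ *
      ((∫ x in Set.Iic (0:ℝ), Real.exp (-x ^ 2 / 2)) + ∫ x in (0:ℝ)..z, Real.exp (-x ^ 2 / 2)) := by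
    intro z
    have h := intervalIntegral.integral_Iic_sub_Iic (μ := volume) (a := (0:ℝ)) (b := z)
      gphi_integrable.integrableOn gphi_integrable.integrableOn
    rw [stdN, ← h]
    ring
  have hlim : ((Real.sqrt (2 * Real.pi))⁻¹ *
      ((∫ x in Set.Iic (0:ℝ), Real.exp (-x ^ 2 / 2)) + ∫ x in Set.Ioi (0:ℝ), Real.exp (-x ^ 2 / 2)))
      = 1 := by
    rw [intervalIntegral.integral_Iic_add_Ioi gphi_integrable.integrableOn gphi_integrable.integrableOn,
      integral_gphi]
    exact inv_mul_cancel₀ (ne_of_gt sqrt2pi_pos)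
  rw [show (1:ℝ) = (Real.sqrt (2 * Real.pi))⁻¹ *
      ((∫ x in Set.Iic (0:ℝ), Real.exp (-x ^ 2 / 2)) + ∫ x in Set.Ioi (0:ℝ), Real.exp (-x ^ 2 / 2))
    from hlim.symm]
  exact Tendsto.congr (fun z => (heq z).symm) ((tendsto_const_nhds.add h0).const_mul _)

lemma stdN_neg_add (z : ℝ) : stdN (-z) = 1 - stdN z := by
  have h1 : ∫ x in Set.Iic (-z), Real.exp (-x ^ 2 / 2) = ∫ x in Set.Ioi z, Real.exp (-x ^ 2 / 2) := by
    have h := integral_comp_neg_Iic (-z) (fun x : ℝ => Real.exp (-x ^ 2 / 2))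
    simp only [neg_sq, neg_neg] at h
    exact h
  have h2 : (∫ x in Set.Iic z, Real.exp (-x ^ 2 / 2)) + ∫ x in Set.Ioi z, Real.exp (-x ^ 2 / 2)
      = Real.sqrt (2 * Real.pi) := by
    rw [intervalIntegral.integral_Iic_add_Ioi gphi_integrable.integrableOn
      gphi_integrable.integrableOn, integral_gphi]
  have : stdN z + stdN (-z) = 1 := by
    rw [stdN, stdN, ← mul_add, h1, h2, inv_mul_cancel₀ (ne_of_gt sqrt2pi_pos)]
  linarith

lemma stdN_tendsto_atBot : Tendsto stdN atBot (𝓝 0) := by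
  have : Tendsto (fun z : ℝ => 1 - stdN (-z)) atBot (𝓝 (1 - 1)) := by
    exact tendsto_const_nhds.sub (stdN_tendsto_atTop.comp tendsto_neg_atBot_atTop)
  norm_num at this
  apply this.congr
  intro z
  rw [← stdN_neg_add, neg_neg]
lemma cfun_tendsto (α kbar σbar ηbar β : ℝ) (hα : α ∈ Set.Ioo (0:ℝ) 1)
    (hk : 0 < kbar) (hσ : 0 < σbar) (hη : 0 < ηbar) (hβ : 1/2 < β) :
    Tendsto (fun t => ATSphi α kbar σbar ηbar β (-(1/2)) t /
      (σbar ^ 2 * (ηbar * t ^ (-(1/2) : ℝ)))) (𝓝[>] (0:ℝ)) (𝓝 1) := by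
  obtain ⟨hα0, hα1⟩ := hα
  have h1α : (0:ℝ) < 1 - α := by linarith
  set C : ℝ := σbar ^ 2 * ηbar * kbar / (1 - α) with hC
  have hCpos : 0 < C := by positivity
  set p : ℝ := β - 1/2 with hp
  have hppos : 0 < p := by simp only [hp]; linarith
  -- x t := C * t ^ p tends to 0 within positive reals
  have hx0 : Tendsto (fun t : ℝ => C * t ^ p) (𝓝[>] (0:ℝ)) (𝓝 0) := by
    have h := (Real.continuousAt_rpow_const 0 p (Or.inr hppos.le)).tendsto
    rw [Real.zero_rpow hppos.ne'] at h
    have h2 : Tendsto (fun t : ℝ => C * t ^ p) (𝓝 (0:ℝ)) (𝓝 (C * 0)) := h.const_mul C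
    rw [mul_zero] at h2
    exact h2.mono_left nhdsWithin_le_nhds
  have hxne : Tendsto (fun t : ℝ => C * t ^ p) (𝓝[>] (0:ℝ)) (𝓝[≠] (0:ℝ)) := by
    apply tendsto_nhdsWithin_of_tendsto_nhds_of_eventually_within _ hx0
    filter_upwards [self_mem_nhdsWithin] with t ht
    exact (mul_pos hCpos (Real.rpow_pos_of_pos ht p)).ne'
  -- derivative of (1+y)^α at 0
  have hd : HasDerivAt (fun y : ℝ => (1 + y) ^ α) α 0 := by
    have h1 : HasDerivAt (fun x : ℝ => x ^ α) (α * (1:ℝ) ^ (α - 1)) 1 :=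
      Real.hasDerivAt_rpow_const (Or.inl one_ne_zero)
    have h2 : HasDerivAt (fun y : ℝ => 1 + y) 1 0 := by
      simpa using (hasDerivAt_id (0:ℝ)).const_add (1:ℝ)
    have h1' : HasDerivAt (fun x : ℝ => x ^ α) (α * (1:ℝ) ^ (α - 1)) ((fun y : ℝ => 1 + y) 0) := by
      simpa using h1
    have h3 := h1'.comp 0 h2
    have e : α * (1:ℝ) ^ (α - 1) * 1 = α := by simp
    rw [e] at h3
    exact h3
  have hslope := hasDerivAt_iff_tendsto_slope.mp hd
  have hq : Tendsto (fun y : ℝ => ((1 + y) ^ α - 1) / (α * y)) (𝓝[≠] (0:ℝ)) (𝓝 1) := by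
    have h4 : Tendsto (fun y : ℝ => slope (fun y : ℝ => (1 + y) ^ α) 0 y / α)
        (𝓝[≠] (0:ℝ)) (𝓝 (α / α)) := hslope.div_const α
    rw [div_self hα0.ne'] at h4
    apply h4.congr
    intro y
    rw [slope_def_field]
    simp only [add_zero, Real.one_rpow, sub_zero]
    rw [div_div, mul_comm y α]
  have hcomp := hq.comp hxne
  apply hcomp.congr'
  filter_upwards [self_mem_nhdsWithin] with t ht
  have ht0 : (0:ℝ) < t := ht
  have htb : (0:ℝ) < t ^ β := Real.rpow_pos_of_pos ht0 β
  have hth : (0:ℝ) < t ^ (-(1/2) : ℝ) := Real.rpow_pos_of_pos ht0 _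
  have htp : t ^ p = t ^ β * t ^ (-(1/2) : ℝ) := by
    rw [show p = β + -(1/2) by rw [hp]; ring, Real.rpow_add ht0]
  have hw : t * σbar ^ 2 * (ηbar * t ^ (-(1/2) : ℝ)) * (kbar * t ^ β) / ((1 - α) * t)
      = C * t ^ p := by
    rw [htp, hC]
    field_simp
  simp only [Function.comp, ATSphi, ATSLaplace, Real.log_exp, hw]
  have htpp : (0:ℝ) < t ^ p := Real.rpow_pos_of_pos ht0 p
  rw [htp, hC]
  field_simp
  ring

noncomputable def glim (a x : ℝ) : ℝ :=
  if x ≤ 0 then 1 else stdN (a * (-Real.sqrt x + 1 / Real.sqrt x))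

lemma glim_of_pos {a x : ℝ} (hx : 0 < x) :
    glim a x = stdN (a * (-Real.sqrt x + 1 / Real.sqrt x)) := if_neg (not_le.2 hx)

lemma glim_nonneg (a x : ℝ) : 0 ≤ glim a x := by
  unfold glim; split
  · norm_num
  · exact stdN_nonneg _

lemma glim_le_one (a x : ℝ) : glim a x ≤ 1 := by
  unfold glim; split
  · norm_num
  · exact stdN_le_one _

lemma sqrt_tendsto_zero_pos : Tendsto Real.sqrt (𝓝[>] (0:ℝ)) (𝓝[>] (0:ℝ)) := by
  apply tendsto_nhdsWithin_of_tendsto_nhds_of_eventually_within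
  · have h := Real.continuous_sqrt.tendsto 0
    rw [Real.sqrt_zero] at h
    exact h.mono_left nhdsWithin_le_nhds
  · filter_upwards [self_mem_nhdsWithin] with x hx
    exact Real.sqrt_pos.2 hx

lemma sqrt_tendsto_zero : Tendsto (fun x : ℝ => Real.sqrt x) (𝓝[>] (0:ℝ)) (𝓝 0) :=
  sqrt_tendsto_zero_pos.mono_right nhdsWithin_le_nhds

lemma arg_tendsto_atTop {a c : ℝ} (ha : 0 < a) (hc : 0 < c) :
    Tendsto (fun x : ℝ => a * (-Real.sqrt x + c / Real.sqrt x)) (𝓝[>] (0:ℝ)) atTop := by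
  apply Tendsto.const_mul_atTop ha
  have h1 : ∀ᶠ x in 𝓝[>] (0:ℝ), (-1:ℝ) ≤ -Real.sqrt x := by
    filter_upwards [sqrt_tendsto_zero.eventually (eventually_le_nhds (by norm_num : (0:ℝ) < 1))]
      with x hx
    linarith
  have h2 : Tendsto (fun x : ℝ => c / Real.sqrt x) (𝓝[>] (0:ℝ)) atTop := by
    simp only [div_eq_mul_inv]
    exact Tendsto.const_mul_atTop hc (tendsto_inv_nhdsGT_zero.comp sqrt_tendsto_zero_pos)
  exact tendsto_atTop_add_left_of_le' _ (-1) h1 h2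

lemma sqrt_atTop : Tendsto Real.sqrt atTop atTop := by
  apply Filter.tendsto_atTop_atTop.2
  intro b
  refine ⟨max (b ^ 2) 0, fun x hx => ?_⟩
  rcases le_total b 0 with hb | hb
  · exact le_trans hb (Real.sqrt_nonneg x)
  · rw [Real.le_sqrt hb (le_trans (le_max_right _ _) hx)]
    exact le_trans (le_max_left _ _) hx

lemma arg_tendsto_atBot {a c : ℝ} (ha : 0 < a) (hc : 0 < c) :
    Tendsto (fun x : ℝ => a * (-Real.sqrt x + c / Real.sqrt x)) atTop atBot := by
  apply Tendsto.const_mul_atBot ha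
  have hf : Tendsto (fun x : ℝ => -Real.sqrt x) atTop atBot :=
    tendsto_neg_atTop_atBot.comp sqrt_atTop
  have hg : ∀ᶠ x in (atTop : Filter ℝ), c / Real.sqrt x ≤ c := by
    filter_upwards [eventually_ge_atTop (1:ℝ)] with x hx
    have h1 : (1:ℝ) ≤ Real.sqrt x := by
      rw [show (1:ℝ) = Real.sqrt 1 by simp]
      exact Real.sqrt_le_sqrt hx
    calc c / Real.sqrt x ≤ c / 1 := by
          apply div_le_div_of_nonneg_left hc.le one_pos h1
      _ = c := div_one c
  exact tendsto_atBot_add_right_of_ge' _ c hf hg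

lemma glim_continuous (a : ℝ) (ha : 0 < a) : Continuous (glim a) := by
  rw [continuous_iff_continuousAt]
  intro x
  rcases lt_trichotomy x 0 with hx | hx | hx
  · apply ContinuousAt.congr continuousAt_const
    filter_upwards [Iio_mem_nhds hx] with y hy
    exact (if_pos (le_of_lt hy)).symm
  · subst hx
    unfold ContinuousAt
    rw [show glim a 0 = 1 from if_pos le_rfl, ← nhdsLE_sup_nhdsGT (0:ℝ),
      Filter.tendsto_sup]
    constructor
    · apply Tendsto.congr' _ (tendsto_const_nhds :
        Tendsto (fun _ : ℝ => (1:ℝ)) (𝓝[≤] (0:ℝ)) (𝓝 1))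
      filter_upwards [self_mem_nhdsWithin] with y hy
      exact (if_pos hy).symm
    · apply Tendsto.congr' _ (stdN_tendsto_atTop.comp (arg_tendsto_atTop ha one_pos))
      filter_upwards [self_mem_nhdsWithin] with y hy
      exact (glim_of_pos hy).symm
  · have hc1 : ContinuousAt (fun y : ℝ => a * (-Real.sqrt y + 1 / Real.sqrt y)) x := by
      apply ContinuousAt.mul continuousAt_const
      apply ContinuousAt.add (Real.continuous_sqrt.continuousAt.neg)
      exact ContinuousAt.div continuousAt_const Real.continuous_sqrt.continuousAt
        (Real.sqrt_pos.2 hx).ne'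
    apply ContinuousAt.congr (stdN_continuous.continuousAt.comp hc1)
    filter_upwards [Ioi_mem_nhds hx] with y hy
    exact (glim_of_pos hy).symm

noncomputable def glimBCF (a : ℝ) (ha : 0 < a) : BoundedContinuousFunction ℝ ℝ :=
  BoundedContinuousFunction.mkOfBound ⟨glim a, glim_continuous a ha⟩ 2 (fun x y => by
    rw [Real.dist_eq]
    have h1 := glim_nonneg a x; have h2 := glim_le_one a x
    have h3 := glim_nonneg a y; have h4 := glim_le_one a y
    rw [abs_le]
    constructor <;> simp only [ContinuousMap.coe_mk] <;> linarith)

lemma glimBCF_apply (a : ℝ) (ha : 0 < a) (x : ℝ) : glimBCF a ha x = glim a x := rfl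

lemma key_claim (a σb : ℝ) (ha : 0 < a) (hσ : 0 < σb) {c : ℝ → ℝ}
    (hc : Tendsto c (𝓝[>] (0:ℝ)) (𝓝 1)) (ε : ℝ) (hε : 0 < ε) :
    ∀ᶠ t in 𝓝[>] (0:ℝ), ∀ x : ℝ, 0 < x →
      |stdN (a * (-Real.sqrt x + c t / Real.sqrt x) - σb * Real.sqrt t / 2 * Real.sqrt x)
        - glim a x| ≤ ε := by
  -- threshold z0
  obtain ⟨z1, hz1⟩ := Metric.tendsto_atTop.mp stdN_tendsto_atTop (ε / 2) (half_pos hε)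
  set z0 : ℝ := max z1 0 with hz0def
  have hUp : ∀ z : ℝ, z0 ≤ z → |stdN z - 1| ≤ ε / 2 := fun z hz => by
    have := hz1 z (le_trans (le_max_left _ _) hz)
    rw [Real.dist_eq] at this
    exact this.le
  have hDown : ∀ z : ℝ, z ≤ -z0 → |stdN z| ≤ ε / 2 := fun z hz => by
    have h1 : z0 ≤ -z := by linarith
    have := hUp (-z) h1
    rw [stdN_neg_add] at this
    calc |stdN z| = |(1 - stdN z) - 1| := by rw [abs_sub_comm]; congr 1; ring
      _ ≤ ε / 2 := this
  -- small threshold m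
  have hm1 := (arg_tendsto_atTop ha (by norm_num : (0:ℝ) < 1/2)).eventually
    (eventually_ge_atTop (z0 + 1))
  rw [eventually_nhdsWithin_iff, Metric.eventually_nhds_iff] at hm1
  obtain ⟨r, hr0, hr⟩ := hm1
  set m : ℝ := r / 2 with hmdef
  have hm0 : 0 < m := by positivity
  have hmP : ∀ x : ℝ, 0 < x → x ≤ m → z0 + 1 ≤ a * (-Real.sqrt x + (1/2) / Real.sqrt x) := by
    intro x hx hxm
    apply hr _ hx
    rw [Real.dist_eq, sub_zero, abs_of_pos hx]
    calc x ≤ r / 2 := hxm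
      _ < r := by linarith
  -- large threshold M
  have hM1 := (arg_tendsto_atBot ha (by norm_num : (0:ℝ) < 2)).eventually
    (eventually_le_atBot (-z0))
  rw [eventually_atTop] at hM1
  obtain ⟨M, hMP⟩ := hM1
  -- eventual conditions on t
  have hE2 : ∀ᶠ t in 𝓝[>] (0:ℝ), |c t - 1| < 1/2 := by
    have := Metric.tendsto_nhds.mp hc (1/2) (by norm_num)
    filter_upwards [this] with t h
    rwa [Real.dist_eq] at h
  have hsqt : Tendsto (fun t : ℝ => Real.sqrt t) (𝓝[>] (0:ℝ)) (𝓝 0) := sqrt_tendsto_zero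
  have hE3 : Tendsto (fun t : ℝ => a * |c t - 1| / Real.sqrt m + σb * Real.sqrt t / 2 * Real.sqrt M)
      (𝓝[>] (0:ℝ)) (𝓝 0) := by
    have t1 : Tendsto (fun t => c t - 1) (𝓝[>] (0:ℝ)) (𝓝 0) := by
      have := hc.sub_const 1; simpa using this
    have t2 : Tendsto (fun t => |c t - 1|) (𝓝[>] (0:ℝ)) (𝓝 0) := by
      have := t1.abs; simpa using this
    have t3 : Tendsto (fun t => a * |c t - 1| / Real.sqrt m) (𝓝[>] (0:ℝ)) (𝓝 0) := by
      have := (t2.const_mul a).div_const (Real.sqrt m); simpa using this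
    have t4 : Tendsto (fun t : ℝ => σb * Real.sqrt t / 2 * Real.sqrt M) (𝓝[>] (0:ℝ)) (𝓝 0) := by
      have := ((hsqt.const_mul σb).div_const 2).mul_const (Real.sqrt M); simpa using this
    have := t3.add t4; simpa using this
  have hE3' : ∀ᶠ t in 𝓝[>] (0:ℝ),
      a * |c t - 1| / Real.sqrt m + σb * Real.sqrt t / 2 * Real.sqrt M ≤ ε / 2 := by
    filter_upwards [Metric.tendsto_nhds.mp hE3 (ε/2) (half_pos hε)] with t h
    rw [Real.dist_eq, sub_zero] at h
    exact le_of_lt (lt_of_le_of_lt (le_abs_self _) h)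
  have hE4 : ∀ᶠ t in 𝓝[>] (0:ℝ), σb * Real.sqrt t / 2 * Real.sqrt m ≤ 1 := by
    have t4 : Tendsto (fun t : ℝ => σb * Real.sqrt t / 2 * Real.sqrt m) (𝓝[>] (0:ℝ)) (𝓝 0) := by
      have := ((hsqt.const_mul σb).div_const 2).mul_const (Real.sqrt m); simpa using this
    filter_upwards [Metric.tendsto_nhds.mp t4 1 one_pos] with t h
    rw [Real.dist_eq, sub_zero] at h
    exact le_of_lt (lt_of_le_of_lt (le_abs_self _) h)
  filter_upwards [self_mem_nhdsWithin, hE2, hE3', hE4] with t ht1 ht2 ht3 ht4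
  intro x hx
  have ht0 : (0:ℝ) < t := ht1
  have hsx : 0 < Real.sqrt x := Real.sqrt_pos.2 hx
  have hsm : 0 < Real.sqrt m := Real.sqrt_pos.2 hm0
  obtain ⟨hcl, hcu⟩ := abs_lt.mp ht2
  have hct_lb : (1:ℝ)/2 ≤ c t := by linarith
  have hct_ub : c t ≤ 2 := by linarith
  have hR0 : 0 ≤ σb * Real.sqrt t / 2 := by positivity
  rw [glim_of_pos hx]
  rcases le_or_gt x m with hxm | hxm
  · -- region 1 : small x
    have hb0 : z0 + 1 ≤ a * (-Real.sqrt x + (1/2) / Real.sqrt x) := hmP x hx hxm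
    have hB1 : z0 ≤ a * (-Real.sqrt x + 1 / Real.sqrt x) := by
      have : a * (-Real.sqrt x + (1/2) / Real.sqrt x) ≤ a * (-Real.sqrt x + 1 / Real.sqrt x) := by
        gcongr
        norm_num
      linarith
    have hA1 : z0 ≤ a * (-Real.sqrt x + c t / Real.sqrt x) - σb * Real.sqrt t / 2 * Real.sqrt x := by
      have h1 : a * (-Real.sqrt x + (1/2) / Real.sqrt x) ≤
          a * (-Real.sqrt x + c t / Real.sqrt x) := by gcongr
      have h2 : σb * Real.sqrt t / 2 * Real.sqrt x ≤ σb * Real.sqrt t / 2 * Real.sqrt m := by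
        gcongr <;> exact Real.sqrt_le_sqrt hxm
      linarith
    have u1 := hUp _ hA1
    have u2 := hUp _ hB1
    calc |stdN (a * (-Real.sqrt x + c t / Real.sqrt x) - σb * Real.sqrt t / 2 * Real.sqrt x)
          - stdN (a * (-Real.sqrt x + 1 / Real.sqrt x))|
        ≤ |stdN (a * (-Real.sqrt x + c t / Real.sqrt x) - σb * Real.sqrt t / 2 * Real.sqrt x) - 1|
          + |stdN (a * (-Real.sqrt x + 1 / Real.sqrt x)) - 1| := by
          rw [show |stdN (a * (-Real.sqrt x + 1 / Real.sqrt x)) - 1|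
            = |(1:ℝ) - stdN (a * (-Real.sqrt x + 1 / Real.sqrt x))| from abs_sub_comm _ _]
          exact abs_sub_le _ 1 _
      _ ≤ ε := by linarith
  · rcases le_or_gt M x with hxM | hxM
    · -- region 3 : large x
      have hb3 := hMP x hxM
      have hB3 : a * (-Real.sqrt x + 1 / Real.sqrt x) ≤ -z0 := by
        have : a * (-Real.sqrt x + 1 / Real.sqrt x) ≤ a * (-Real.sqrt x + 2 / Real.sqrt x) := by
          gcongr
          norm_num
        linarith
      have hA3 : a * (-Real.sqrt x + c t / Real.sqrt x) - σb * Real.sqrt t / 2 * Real.sqrt x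
          ≤ -z0 := by
        have h1 : a * (-Real.sqrt x + c t / Real.sqrt x) ≤
            a * (-Real.sqrt x + 2 / Real.sqrt x) := by gcongr
        have h2 : 0 ≤ σb * Real.sqrt t / 2 * Real.sqrt x := by positivity
        linarith
      have u1 := hDown _ hA3
      have u2 := hDown _ hB3
      calc |stdN (a * (-Real.sqrt x + c t / Real.sqrt x) - σb * Real.sqrt t / 2 * Real.sqrt x)
            - stdN (a * (-Real.sqrt x + 1 / Real.sqrt x))|
          ≤ |stdN (a * (-Real.sqrt x + c t / Real.sqrt x) - σb * Real.sqrt t / 2 * Real.sqrt x) - 0|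
            + |(0:ℝ) - stdN (a * (-Real.sqrt x + 1 / Real.sqrt x))| := abs_sub_le _ 0 _
        _ ≤ ε := by
            rw [sub_zero, zero_sub, abs_neg]
            linarith
    · -- region 2 : middle
      have hdiffeq : (a * (-Real.sqrt x + c t / Real.sqrt x) - σb * Real.sqrt t / 2 * Real.sqrt x)
          - a * (-Real.sqrt x + 1 / Real.sqrt x)
          = a * (c t - 1) / Real.sqrt x - σb * Real.sqrt t / 2 * Real.sqrt x := by
        field_simp
        ring
      have hbnd : |a * (c t - 1) / Real.sqrt x - σb * Real.sqrt t / 2 * Real.sqrt x|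
          ≤ ε / 2 := by
        have h1 : |a * (c t - 1) / Real.sqrt x - σb * Real.sqrt t / 2 * Real.sqrt x|
            ≤ |a * (c t - 1) / Real.sqrt x| + |σb * Real.sqrt t / 2 * Real.sqrt x| := abs_sub _ _
        have h2 : |a * (c t - 1) / Real.sqrt x| = a * |c t - 1| / Real.sqrt x := by
          rw [abs_div, abs_mul, abs_of_pos ha, abs_of_pos hsx]
        have h3 : |σb * Real.sqrt t / 2 * Real.sqrt x| = σb * Real.sqrt t / 2 * Real.sqrt x := by
          rw [abs_of_nonneg (by positivity)]
        have h4 : a * |c t - 1| / Real.sqrt x ≤ a * |c t - 1| / Real.sqrt m := by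
          gcongr <;> first | positivity | exact Real.sqrt_le_sqrt hxm.le
        have h5 : σb * Real.sqrt t / 2 * Real.sqrt x ≤ σb * Real.sqrt t / 2 * Real.sqrt M := by
          gcongr <;> exact Real.sqrt_le_sqrt hxM.le
        rw [h2, h3] at h1
        linarith
      calc |stdN (a * (-Real.sqrt x + c t / Real.sqrt x) - σb * Real.sqrt t / 2 * Real.sqrt x)
            - stdN (a * (-Real.sqrt x + 1 / Real.sqrt x))|
          ≤ |(a * (-Real.sqrt x + c t / Real.sqrt x) - σb * Real.sqrt t / 2 * Real.sqrt x)
            - a * (-Real.sqrt x + 1 / Real.sqrt x)| := stdN_abs_sub _ _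
        _ ≤ ε := by rw [hdiffeq]; linarith [hbnd]

/-- for `δ = −1/2` and `β > 1/2`, if the strictly positive random
variables `X_t` converge in distribution to a strictly positive `X` as `t → 0⁺`, then
`E[N(σ̄·η̄·(−√X_t + φ_t/(σ̄²·η_t·√X_t)) − σ̄·√(t·X_t)/2)] → E[N(σ̄·η̄·(−√X + 1/√X))]`. -/
theorem stmt10 (α kbar σbar ηbar β δ : ℝ) (hα : α ∈ Set.Ioo (0:ℝ) 1)
    (hk : 0 < kbar) (hσ : 0 < σbar) (hη : 0 < ηbar)
    (hδ : δ = -(1/2)) (hβ : 1/2 < β)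
    {Ω : Type*} [MeasurableSpace Ω] (P : Measure Ω) [IsProbabilityMeasure P]
    (X : ℝ → Ω → ℝ) (Xlim : Ω → ℝ)
    (hXm : ∀ t > 0, Measurable (X t)) (hXlimm : Measurable Xlim)
    (hXpos : ∀ t > 0, ∀ ω, 0 < X t ω) (hXlimpos : ∀ ω, 0 < Xlim ω)
    (hconv : ∀ f : BoundedContinuousFunction ℝ ℝ,
      Tendsto (fun t => ∫ ω, f (X t ω) ∂P) (𝓝[>] (0:ℝ)) (𝓝 (∫ ω, f (Xlim ω) ∂P))) :
    Tendsto
      (fun t => ∫ ω, stdN (σbar * ηbar *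
          (-Real.sqrt (X t ω) + ATSphi α kbar σbar ηbar β δ t /
            (σbar ^ 2 * (ηbar * t ^ δ) * Real.sqrt (X t ω))) -
          σbar * Real.sqrt (t * X t ω) / 2) ∂P)
      (𝓝[>] (0:ℝ))
      (𝓝 (∫ ω, stdN (σbar * ηbar * (-Real.sqrt (Xlim ω) + 1 / Real.sqrt (Xlim ω))) ∂P)) := by
  subst hδ
  have ha : 0 < σbar * ηbar := mul_pos hσ hη
  have hc : Tendsto (fun t => ATSphi α kbar σbar ηbar β (-(1/2)) t /
      (σbar ^ 2 * (ηbar * t ^ (-(1/2) : ℝ)))) (𝓝[>] (0:ℝ)) (𝓝 1) :=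
    cfun_tendsto α kbar σbar ηbar β hα hk hσ hη hβ
  set c : ℝ → ℝ := fun t => ATSphi α kbar σbar ηbar β (-(1/2)) t /
      (σbar ^ 2 * (ηbar * t ^ (-(1/2) : ℝ))) with hcdef
  set a : ℝ := σbar * ηbar with hadef
  -- pointwise rewriting of the integrand
  have hEq : ∀ t : ℝ, 0 < t → ∀ ω,
      stdN (a * (-Real.sqrt (X t ω) + ATSphi α kbar σbar ηbar β (-(1/2)) t /
          (σbar ^ 2 * (ηbar * t ^ (-(1/2) : ℝ)) * Real.sqrt (X t ω))) -
        σbar * Real.sqrt (t * X t ω) / 2)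
      = stdN (a * (-Real.sqrt (X t ω) + c t / Real.sqrt (X t ω)) -
        σbar * Real.sqrt t / 2 * Real.sqrt (X t ω)) := by
    intro t ht ω
    congr 1
    rw [Real.sqrt_mul ht.le, hcdef]
    simp only []
    rw [← div_div]
    ring
  have hInt : ∀ t : ℝ, 0 < t →
      Integrable (fun ω => stdN (a * (-Real.sqrt (X t ω) + c t / Real.sqrt (X t ω)) -
        σbar * Real.sqrt t / 2 * Real.sqrt (X t ω))) P := by
    intro t ht
    have hsq : Measurable fun ω => Real.sqrt (X t ω) :=
      Real.continuous_sqrt.measurable.comp (hXm t ht)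
    have harg : Measurable fun ω => a * (-Real.sqrt (X t ω) + c t / Real.sqrt (X t ω)) -
        σbar * Real.sqrt t / 2 * Real.sqrt (X t ω) :=
      ((hsq.neg.add (measurable_const.div hsq)).const_mul a).sub (hsq.const_mul _)
    apply Integrable.mono' (integrable_const (1:ℝ))
      (stdN_continuous.measurable.comp harg).aestronglyMeasurable
    filter_upwards with ω
    rw [Real.norm_eq_abs, abs_le]
    exact ⟨le_trans (by norm_num) (stdN_nonneg _), stdN_le_one _⟩
  have hIntG : ∀ t : ℝ, 0 < t → Integrable (fun ω => glim a (X t ω)) P := by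
    intro t ht
    apply Integrable.mono' (integrable_const (1:ℝ))
      ((glim_continuous a ha).measurable.comp (hXm t ht)).aestronglyMeasurable
    filter_upwards with ω
    rw [Real.norm_eq_abs, abs_le]
    exact ⟨le_trans (by norm_num) (glim_nonneg _ _), glim_le_one _ _⟩
  have hG : Tendsto (fun t => ∫ ω, glim a (X t ω) ∂P) (𝓝[>] (0:ℝ))
      (𝓝 (∫ ω, glim a (Xlim ω) ∂P)) := by
    have := hconv (glimBCF a ha)
    simpa only [glimBCF_apply] using this
  have hLimEq : ∫ ω, glim a (Xlim ω) ∂P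
      = ∫ ω, stdN (a * (-Real.sqrt (Xlim ω) + 1 / Real.sqrt (Xlim ω))) ∂P := by
    apply integral_congr_ae
    filter_upwards with ω
    exact glim_of_pos (hXlimpos ω)
  have hdiff : Tendsto (fun t =>
      (∫ ω, stdN (a * (-Real.sqrt (X t ω) + ATSphi α kbar σbar ηbar β (-(1/2)) t /
          (σbar ^ 2 * (ηbar * t ^ (-(1/2) : ℝ)) * Real.sqrt (X t ω))) -
        σbar * Real.sqrt (t * X t ω) / 2) ∂P) - ∫ ω, glim a (X t ω) ∂P)
      (𝓝[>] (0:ℝ)) (𝓝 0) := by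
    rw [NormedAddCommGroup.tendsto_nhds_zero]
    intro ε hε
    filter_upwards [key_claim a σbar ha hσ hc (ε/2) (half_pos hε), self_mem_nhdsWithin]
      with t hKey ht
    have ht0 : (0:ℝ) < t := ht
    have hL : (∫ ω, stdN (a * (-Real.sqrt (X t ω) + ATSphi α kbar σbar ηbar β (-(1/2)) t /
          (σbar ^ 2 * (ηbar * t ^ (-(1/2) : ℝ)) * Real.sqrt (X t ω))) -
        σbar * Real.sqrt (t * X t ω) / 2) ∂P)
        = ∫ ω, stdN (a * (-Real.sqrt (X t ω) + c t / Real.sqrt (X t ω)) -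
          σbar * Real.sqrt t / 2 * Real.sqrt (X t ω)) ∂P := by
      apply integral_congr_ae
      filter_upwards with ω
      exact hEq t ht0 ω
    rw [Real.norm_eq_abs, hL, ← integral_sub (hInt t ht0) (hIntG t ht0)]
    have h1 := norm_integral_le_integral_norm (μ := P)
      (fun ω => stdN (a * (-Real.sqrt (X t ω) + c t / Real.sqrt (X t ω)) -
        σbar * Real.sqrt t / 2 * Real.sqrt (X t ω)) - glim a (X t ω))
    simp only [Real.norm_eq_abs] at h1
    have h2 : (∫ ω, |stdN (a * (-Real.sqrt (X t ω) + c t / Real.sqrt (X t ω)) -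
        σbar * Real.sqrt t / 2 * Real.sqrt (X t ω)) - glim a (X t ω)| ∂P)
        ≤ ∫ _ω, (ε/2) ∂P := by
      apply integral_mono ((hInt t ht0).sub (hIntG t ht0)).abs (integrable_const _)
      intro ω
      exact hKey (X t ω) (hXpos t ht0 ω)
    have h3 : (∫ _ω : Ω, (ε/2) ∂P) = ε/2 := by simp [measure_univ]
    calc |∫ ω, (stdN (a * (-Real.sqrt (X t ω) + c t / Real.sqrt (X t ω)) -
          σbar * Real.sqrt t / 2 * Real.sqrt (X t ω)) - glim a (X t ω)) ∂P|
        ≤ ε/2 := by rw [← h3]; exact le_trans h1 h2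
      _ < ε := by linarith
  have hfinal := hdiff.add hG
  rw [zero_add, hLimEq] at hfinal
  exact hfinal.congr (fun t => sub_add_cancel _ _)
end
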